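/- arXiv:2211.15256 — 3 statements merged into one kernel-verified Lean document; each statement's English description precedes it below -/
import Mathlib

section
/- Let φ(x,t) := t^{p(x)} with a variable exponent p: Ω → [1,∞). Then φ satisfies the restricted (VA1) condition if and only if 1/p is strongly log-Hölder continuous, i.e. 1/p is log-Hölder continuous and lim_{x→y} |1 − 1/p(x)| · log(1/|x−y|) = 0 uniformly in y ∈ {p = 1}. -/
open MeasureTheory Filter Set Topology Metric
open scoped ENNReal NNReal

noncomputable section

/-- Euclidean space `ℝⁿ`. -/
abbrev Euc (n : ℕ) := EuclideanSpace ℝ (Fin n)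

variable {n : ℕ}

/-- The divergence of a vector field on `ℝⁿ`. -/
def divg (w : Euc n → Euc n) (x : Euc n) : ℝ :=
  ∑ i, fderiv ℝ w x (EuclideanSpace.single i 1) i

/-- `C¹` vector fields with compact support contained in `Ω`. -/
def IsTestField (Ω : Set (Euc n)) (w : Euc n → Euc n) : Prop :=
  ContDiff ℝ 1 w ∧ HasCompactSupport w ∧ tsupport w ⊆ Ω

/-- `Ω` is a bounded domain. -/
def IsBoundedDomain (Ω : Set (Euc n)) : Prop :=
  IsOpen Ω ∧ IsConnected Ω ∧ Bornology.IsBounded Ω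

/-- The modular `ρ_φ(f) = ∫_Ω φ(x,|f(x)|) dx` for scalar functions. -/
def modular (Ω : Set (Euc n)) (φ : Euc n → ℝ → ℝ≥0∞) (f : Euc n → ℝ) : ℝ≥0∞ :=
  ∫⁻ x in Ω, φ x |f x|

/-- The modular `ρ_φ(|w|) = ∫_Ω φ(x,|w(x)|) dx` for vector-valued functions. -/
def vmodular (Ω : Set (Euc n)) (φ : Euc n → ℝ → ℝ≥0∞) (w : Euc n → Euc n) : ℝ≥0∞ :=
  ∫⁻ x in Ω, φ x ‖w x‖

/-- The conjugate Φ-function `φ*(x,t) = sup_{s ≥ 0} (st − φ(x,s))`. -/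
def conj (φ : Euc n → ℝ → ℝ≥0∞) (x : Euc n) (t : ℝ) : ℝ≥0∞ :=
  ⨆ s : {s : ℝ // 0 ≤ s}, ENNReal.ofReal ((s : ℝ) * t) - φ x (s : ℝ)

/-- The Luxemburg (quasi)norm of a scalar function. -/
def luxNorm (Ω : Set (Euc n)) (φ : Euc n → ℝ → ℝ≥0∞) (f : Euc n → ℝ) : ℝ≥0∞ :=
  ⨅ l ∈ {l : ℝ | 0 < l ∧ modular Ω φ (fun x => f x / l) ≤ 1}, ENNReal.ofReal l

/-- The Luxemburg (quasi)norm of a vector-valued function. -/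
def luxNormV (Ω : Set (Euc n)) (φ : Euc n → ℝ → ℝ≥0∞) (w : Euc n → Euc n) : ℝ≥0∞ :=
  ⨅ l ∈ {l : ℝ | 0 < l ∧ vmodular Ω φ (fun x => (l⁻¹ : ℝ) • w x) ≤ 1}, ENNReal.ofReal l

/-- The dual norm `V_φ(u)`. -/
def Vphi (Ω : Set (Euc n)) (φ : Euc n → ℝ → ℝ≥0∞) (u : Euc n → ℝ) : ℝ≥0∞ :=
  ⨆ w ∈ {w : Euc n → Euc n | IsTestField Ω w ∧ luxNormV Ω (conj φ) w ≤ 1},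
    ENNReal.ofReal (∫ x in Ω, u x * divg w x)

/-- The dual modular `ρ_{V,φ}(u)`. -/
def rhoV (Ω : Set (Euc n)) (φ : Euc n → ℝ → ℝ≥0∞) (u : Euc n → ℝ) : ℝ≥0∞ :=
  ⨆ w ∈ {w : Euc n → Euc n | IsTestField Ω w},
    (ENNReal.ofReal (∫ x in Ω, u x * divg w x) - vmodular Ω (conj φ) w)

/-- The recession function `φ'_∞(x) = limsup_{t→∞} φ(x,t)/t`. -/
def recession (φ : Euc n → ℝ → ℝ≥0∞) (x : Euc n) : ℝ≥0∞ :=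
  Filter.limsup (fun t : ℝ => φ x t / ENNReal.ofReal t) Filter.atTop

/-- `φ` is a weak Φ-function on `Ω`. -/
structure IsWeakPhi (Ω : Set (Euc n)) (φ : Euc n → ℝ → ℝ≥0∞) : Prop where
  meas : ∀ f : Euc n → ℝ, Measurable f → Measurable fun x => φ x |f x|
  mono : ∀ x ∈ Ω, ∀ s t : ℝ, 0 ≤ s → s ≤ t → φ x s ≤ φ x t
  zero : ∀ x ∈ Ω, φ x 0 = 0
  lim_zero : ∀ x ∈ Ω, Tendsto (φ x) (𝓝[>] (0 : ℝ)) (𝓝 0)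
  lim_top : ∀ x ∈ Ω, Tendsto (φ x) atTop (𝓝 ∞)
  aInc1 : ∃ L : ℝ≥0∞, 1 ≤ L ∧ ∀ x ∈ Ω, ∀ s t : ℝ, 0 < s → s ≤ t →
    φ x s / ENNReal.ofReal s ≤ L * (φ x t / ENNReal.ofReal t)

/-- `φ` is a convex Φ-function on `Ω`. -/
structure IsConvexPhi (Ω : Set (Euc n)) (φ : Euc n → ℝ → ℝ≥0∞)
    extends IsWeakPhi Ω φ : Prop where
  convex : ∀ x ∈ Ω, ∀ a b θ : ℝ, 0 ≤ a → 0 ≤ b → θ ∈ Icc (0 : ℝ) 1 →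
    φ x (θ * a + (1 - θ) * b) ≤ ENNReal.ofReal θ * φ x a + ENNReal.ofReal (1 - θ) * φ x b
  left_cont : ∀ x ∈ Ω, ∀ t : ℝ, 0 < t → Tendsto (φ x) (𝓝[<] t) (𝓝 (φ x t))

/-- The condition (A0). -/
def A0 (Ω : Set (Euc n)) (φ : Euc n → ℝ → ℝ≥0∞) : Prop :=
  ∃ β : ℝ, 0 < β ∧ β ≤ 1 ∧ ∀ x ∈ Ω, φ x β ≤ 1 ∧ 1 ≤ φ x β⁻¹

/-- The condition (A1). -/
def A1 (Ω : Set (Euc n)) (φ : Euc n → ℝ → ℝ≥0∞) : Prop :=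
  ∀ K : ℝ, 0 < K → ∃ β : ℝ, 0 < β ∧ β ≤ 1 ∧
    ∀ x ∈ Ω, ∀ y ∈ Ω, ∀ t : ℝ, 0 ≤ t →
      φ y t ≤ ENNReal.ofReal K / ENNReal.ofReal (dist x y ^ n) →
      φ x (β * t) ≤ φ y t + 1

/-- `ω` is a modulus of continuity. -/
def IsModulus (ω : ℝ → ℝ≥0∞) : Prop :=
  (∀ s t : ℝ, 0 ≤ s → s ≤ t → ω s ≤ ω t) ∧ ω 0 = 0 ∧ Tendsto ω (𝓝[>] (0 : ℝ)) (𝓝 0)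

/-- The (VA1) inequality for a given constant `K` and modulus of continuity `ω`. -/
def VA1With (Ω : Set (Euc n)) (φ : Euc n → ℝ → ℝ≥0∞) (K : ℝ) (ω : ℝ → ℝ≥0∞) : Prop :=
  ∀ x ∈ Ω, ∀ y ∈ Ω, ∀ t : ℝ, 0 ≤ t →
    φ y t ≤ ENNReal.ofReal K / ENNReal.ofReal (dist x y ^ n) →
    φ x (t * ((1 + ω (dist x y))⁻¹).toReal) ≤ φ y t + ω (dist x y)

/-- The condition (VA1). -/
def VA1 (Ω : Set (Euc n)) (φ : Euc n → ℝ → ℝ≥0∞) : Prop :=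
  ∀ K : ℝ, 0 < K → ∃ ω : ℝ → ℝ≥0∞, IsModulus ω ∧ VA1With Ω φ K ω

/-- The restricted (VA1) condition: (A1) together with the (VA1) inequality whenever
one of the two points has finite recession function. -/
def RestrictedVA1 (Ω : Set (Euc n)) (φ : Euc n → ℝ → ℝ≥0∞) : Prop :=
  A1 Ω φ ∧ ∀ K : ℝ, 0 < K → ∃ ω : ℝ → ℝ≥0∞, IsModulus ω ∧
    ∀ x ∈ Ω, ∀ y ∈ Ω, (recession φ x < ∞ ∨ recession φ y < ∞) →
      ∀ t : ℝ, 0 ≤ t →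
        φ y t ≤ ENNReal.ofReal K / ENNReal.ofReal (dist x y ^ n) →
        φ x (t * ((1 + ω (dist x y))⁻¹).toReal) ≤ φ y t + ω (dist x y)

/-- The condition (aDec)_q. -/
def aDecAt (Ω : Set (Euc n)) (φ : Euc n → ℝ → ℝ≥0∞) (q : ℝ) : Prop :=
  ∃ L : ℝ≥0∞, 1 ≤ L ∧ ∀ x ∈ Ω, ∀ s t : ℝ, 0 < s → s ≤ t →
    φ x t / ENNReal.ofReal (t ^ q) ≤ L * (φ x s / ENNReal.ofReal (s ^ q))

/-- The condition (aDec): (aDec)_q for some finite `q`. -/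
def aDec (Ω : Set (Euc n)) (φ : Euc n → ℝ → ℝ≥0∞) : Prop :=
  ∃ q : ℝ, aDecAt Ω φ q

/-- Membership in the generalized Orlicz space `L^φ(Ω)`. -/
def MemLphi (Ω : Set (Euc n)) (φ : Euc n → ℝ → ℝ≥0∞) (u : Euc n → ℝ) : Prop :=
  Measurable u ∧ ∃ l : ℝ, 0 < l ∧ modular Ω φ (fun x => l * u x) < ∞

/-- Membership in `BV^φ(Ω)`. -/
def MemBVphi (Ω : Set (Euc n)) (φ : Euc n → ℝ → ℝ≥0∞) (u : Euc n → ℝ) : Prop :=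
  MemLphi Ω φ u ∧ Integrable u (volume.restrict Ω) ∧
    luxNorm Ω φ u + Vphi Ω φ u < ∞

/-- `g` is the distributional (weak) gradient of `u` in `Ω`. -/
def HasWeakGradientOn (Ω : Set (Euc n)) (u : Euc n → ℝ) (g : Euc n → Euc n) : Prop :=
  ∀ w : Euc n → Euc n, IsTestField Ω w →
    ∫ x in Ω, u x * divg w x = -∫ x in Ω, (inner ℝ (g x) (w x) : ℝ)

/-- A decomposition `Du = ∇ᵃu·dx + σ·dν` of the derivative measure of a BV function `u`,
where `ν = |Dˢu|` is the total variation of the singular part and `σ` its polar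
(a unit vector field `ν`-a.e.). -/
def IsBVDecomp (Ω : Set (Euc n)) (u : Euc n → ℝ) (ga : Euc n → Euc n)
    (ν : Measure (Euc n)) (σ : Euc n → Euc n) : Prop :=
  Integrable u (volume.restrict Ω) ∧
  Integrable ga (volume.restrict Ω) ∧
  IsFiniteMeasure ν ∧ ν Ωᶜ = 0 ∧ Measure.MutuallySingular ν volume ∧
  (∀ᵐ x ∂ν, ‖σ x‖ = 1) ∧
  (∀ w : Euc n → Euc n, IsTestField Ω w →
    ∫ x in Ω, u x * divg w x =
      -((∫ x in Ω, (inner ℝ (ga x) (w x) : ℝ)) + ∫ x, (inner ℝ (σ x) (w x) : ℝ) ∂ν))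

/-! ### Auxiliary lemmas -/

private lemma euc0_eq (x y : Euc 0) : x = y := by
  have : dist x y = 0 := by rw [EuclideanSpace.dist_eq]; simp
  exact eq_of_dist_eq_zero this

private lemma rec_lt_top {p : Euc n → ℝ} {x : Euc n} (h : p x = 1) :
    recession (fun x t => ENNReal.ofReal (t ^ p x)) x < ⊤ := by
  have h1 : recession (fun x t => ENNReal.ofReal (t ^ p x)) x = 1 := by
    unfold recession
    have : limsup (fun t : ℝ => ENNReal.ofReal (t ^ p x) / ENNReal.ofReal t) atTop
        = limsup (fun _ : ℝ => (1:ℝ≥0∞)) atTop := by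
      apply limsup_congr
      filter_upwards [eventually_gt_atTop (0:ℝ)] with t ht
      rw [h, Real.rpow_one, ENNReal.div_self (by simp [ht]) (by simp)]
    rw [this, limsup_const]
  rw [h1]; exact ENNReal.one_lt_top

private lemma rec_eq_top {p : Euc n → ℝ} {x : Euc n} (h : 1 < p x) :
    recession (fun x t => ENNReal.ofReal (t ^ p x)) x = ⊤ := by
  have heq : ∀ᶠ t : ℝ in atTop,
      ENNReal.ofReal (t ^ p x) / ENNReal.ofReal t = ENNReal.ofReal (t ^ (p x - 1)) := by
    filter_upwards [eventually_gt_atTop (0:ℝ)] with t ht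
    rw [← ENNReal.ofReal_div_of_pos ht, Real.rpow_sub ht, Real.rpow_one]
  have htend : Tendsto (fun t : ℝ => ENNReal.ofReal (t ^ p x) / ENNReal.ofReal t)
      atTop (𝓝 ⊤) := by
    rw [tendsto_congr' heq]
    exact ENNReal.tendsto_ofReal_atTop.comp (tendsto_rpow_atTop (by linarith))
  exact htend.limsup_eq

/-- `p = 1` on `Ω` whenever the recession function is finite. -/
private lemma rec_finite_imp {p : Euc n → ℝ} {x : Euc n} (h1 : 1 ≤ p x)
    (h : recession (fun x t => ENNReal.ofReal (t ^ p x)) x < ⊤) : p x = 1 := by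
  by_contra hne
  rw [rec_eq_top (lt_of_le_of_ne h1 (Ne.symm hne))] at h
  exact absurd h (lt_irrefl _)

private lemma logE_ge_one {d : ℝ} (hd : 0 ≤ d) : 1 ≤ Real.log (Real.exp 1 + 1 / d) := by
  calc (1:ℝ) = Real.log (Real.exp 1) := (Real.log_exp 1).symm
    _ ≤ _ := Real.log_le_log (Real.exp_pos 1) (le_add_of_nonneg_right (by positivity))


private lemma arith1 {px py L E B nr : ℝ} (hpx : 1 ≤ px) (hpy : 1 ≤ py)
    (hL1 : 1 ≤ L) (hE1 : 1 ≤ E) (hE2 : E ≤ Real.log 2 + L) (hB0 : 0 ≤ B) (hn1 : 1 ≤ nr)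
    (hlog : px * (-B + nr / py * L) ≤ Real.log 2 + nr * L) :
    1 / py - 1 / px ≤ ((1 + Real.log 2) * max ((Real.log 2 + B) / nr) 2) / E := by
  have hL2 : 0 < Real.log 2 := Real.log_pos one_lt_two
  have hpx0 : (0:ℝ) < px := by linarith
  have hpy0 : (0:ℝ) < py := by linarith
  have hn0 : (0:ℝ) < nr := by linarith
  have hE0 : (0:ℝ) < E := by linarith
  obtain ⟨a, hadef⟩ : ∃ a : ℝ, a = 1 / py - 1 / px := ⟨_, rfl⟩
  rw [← hadef]
  rcases le_or_gt a 0 with hnega | hposa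
  · refine hnega.trans (div_nonneg (mul_nonneg (by linarith)
      (le_trans (by norm_num) (le_max_right _ _))) hE0.le)
  have hid : px * (nr * L * a) = px * (nr / py * L) - nr * L := by
    rw [hadef]; field_simp
  have hprod : 0 ≤ (px - 1) * Real.log 2 := mul_nonneg (by linarith) hL2.le
  have step0 : px * (nr * L * a) ≤ px * (Real.log 2 + B) := by linarith
  have step1 : nr * L * a ≤ Real.log 2 + B := le_of_mul_le_mul_left step0 hpx0
  rw [le_div_iff₀ hE0]
  have h3 : E ≤ (1 + Real.log 2) * L := by
    have h4 := mul_nonneg (sub_nonneg.2 hL1) hL2.le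
    nlinarith
  have h5 : a * L ≤ (Real.log 2 + B) / nr := by
    rw [le_div_iff₀ hn0]; linarith
  calc a * E ≤ a * ((1 + Real.log 2) * L) := by
        nlinarith [mul_nonneg hposa.le (sub_nonneg.2 h3)]
    _ = (1 + Real.log 2) * (a * L) := by ring
    _ ≤ (1 + Real.log 2) * ((Real.log 2 + B) / nr) :=
        mul_le_mul_of_nonneg_left h5 (by linarith)
    _ ≤ (1 + Real.log 2) * max ((Real.log 2 + B) / nr) 2 :=
        mul_le_mul_of_nonneg_left (le_max_left _ _) (by linarith)

private lemma arith2 {px py E B nr : ℝ} (hpx : 1 ≤ px) (hpy : 1 ≤ py) (hE1 : 1 ≤ E)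
    (hE2 : E ≤ 1 + Real.log 2) (hB0 : 0 ≤ B) (hn1 : 1 ≤ nr) :
    1 / py - 1 / px ≤ ((1 + Real.log 2) * max ((Real.log 2 + B) / nr) 2) / E := by
  have hL2 : 0 < Real.log 2 := Real.log_pos one_lt_two
  have hpx0 : (0:ℝ) < px := by linarith
  have hpy0 : (0:ℝ) < py := by linarith
  have hE0 : (0:ℝ) < E := by linarith
  have hLHS : 1 / py - 1 / px ≤ 1 := by
    have h1 : 1 / py ≤ 1 := by rw [div_le_one hpy0]; exact hpy
    have h2 : 0 < 1 / px := by positivity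
    linarith
  rw [le_div_iff₀ hE0]
  have hC2 : 2 * (1 + Real.log 2) ≤ (1 + Real.log 2) * max ((Real.log 2 + B) / nr) 2 := by
    have := mul_le_mul_of_nonneg_left (le_max_right ((Real.log 2 + B) / nr) 2)
      (by linarith : (0:ℝ) ≤ 1 + Real.log 2)
    linarith
  have h6 : (1 / py - 1 / px) * E ≤ E := by
    nlinarith [mul_nonneg (sub_nonneg.2 hLHS) hE0.le]
  linarith

/-- Forward direction, first part: (A1) implies log-Hölder continuity of `1/p`. -/
private lemma fwd_LH (Ω : Set (Euc n)) (p : Euc n → ℝ) (hp : ∀ x ∈ Ω, 1 ≤ p x)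
    (hA1 : A1 Ω (fun x t => ENNReal.ofReal (t ^ p x))) :
    ∃ C : ℝ, 0 ≤ C ∧ ∀ x ∈ Ω, ∀ y ∈ Ω,
      |1 / p x - 1 / p y| ≤ C / Real.log (Real.exp 1 + 1 / dist x y) := by
  by_cases hn : n = 0
  · subst hn
    refine ⟨0, le_refl 0, fun x hx y hy => ?_⟩
    rw [euc0_eq x y]
    simp
  have hn1 : 1 ≤ (n:ℝ) := by exact_mod_cast Nat.one_le_iff_ne_zero.mpr hn
  have hn0 : (0:ℝ) < n := by linarith
  obtain ⟨β, hβ0, hβ1, hA⟩ := hA1 1 one_pos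
  have hL2 : 0 < Real.log 2 := Real.log_pos one_lt_two
  set B := Real.log β⁻¹ with hBdef
  have hB0 : 0 ≤ B := by
    rw [hBdef, Real.log_inv]; linarith [Real.log_nonpos hβ0.le hβ1]
  set C := (1 + Real.log 2) * max ((Real.log 2 + B) / n) 2 with hCdef
  have hC0 : 0 ≤ C :=
    mul_nonneg (by linarith) (le_trans (by norm_num) (le_max_right _ _))
  have key : ∀ x ∈ Ω, ∀ y ∈ Ω,
      1 / p y - 1 / p x ≤ C / Real.log (Real.exp 1 + 1 / dist x y) := by
    intro x hx y hy
    have hpx := hp x hx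
    have hpy := hp y hy
    have hpx0 : 0 < p x := by linarith
    have hpy0 : 0 < p y := by linarith
    set d := dist x y with hddef
    have hd0 : 0 ≤ d := dist_nonneg
    set E := Real.log (Real.exp 1 + 1 / d) with hEdef
    have hE1 : 1 ≤ E := logE_ge_one hd0
    have hE0 : 0 < E := by linarith
    rcases eq_or_lt_of_le hd0 with hd | hd
    · have hxy : x = y := eq_of_dist_eq_zero hd.symm
      have hpxy : p x = p y := by rw [hxy]
      rw [hpxy, sub_self]
      exact div_nonneg hC0 hE0.le
    by_cases hsmall : d < (Real.exp 1)⁻¹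
    · -- main case : d small
      have hexpd : Real.exp 1 < d⁻¹ := by
        have h1 := mul_lt_mul_of_pos_left hsmall (Real.exp_pos 1)
        rw [mul_inv_cancel₀ (ne_of_gt (Real.exp_pos 1))] at h1
        nlinarith [mul_inv_cancel₀ (ne_of_gt hd), inv_pos.mpr hd]
      set L := Real.log d⁻¹ with hLdef
      have hL1 : 1 ≤ L := by
        calc (1:ℝ) = Real.log (Real.exp 1) := (Real.log_exp 1).symm
          _ ≤ L := Real.log_le_log (Real.exp_pos 1) hexpd.le
      have hdlt1 : d < 1 := by
        refine hsmall.trans_le ?_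
        rw [← Real.exp_neg, ← Real.exp_zero]
        exact (Real.exp_le_exp.mpr (by norm_num))
      set t := d ^ (-(n:ℝ) / p y) with htdef
      have ht0 : 0 < t := Real.rpow_pos_of_pos hd _
      have htpy : t ^ p y = (d ^ n)⁻¹ := by
        rw [htdef, ← Real.rpow_mul hd0, div_mul_cancel₀ _ (ne_of_gt hpy0),
          Real.rpow_neg hd0, Real.rpow_natCast]
      have hprem : ENNReal.ofReal (t ^ p y) ≤ ENNReal.ofReal 1 / ENNReal.ofReal (d ^ n) := by
        rw [htpy, ← ENNReal.ofReal_div_of_pos (pow_pos hd n), one_div]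
      have hkey := hA x hx y hy t ht0.le hprem
      simp only [] at hkey
      rw [htpy] at hkey
      have hreal : (β * t) ^ p x ≤ (d ^ n)⁻¹ + 1 := by
        rw [show ((1:ℝ≥0∞)) = ENNReal.ofReal 1 from ENNReal.ofReal_one.symm,
          ← ENNReal.ofReal_add (by positivity) zero_le_one] at hkey
        exact (ENNReal.ofReal_le_ofReal_iff (by positivity)).1 hkey
      have hdn1 : 1 ≤ (d ^ n)⁻¹ := by
        have hpow : d ^ n ≤ 1 := pow_le_one₀ hd0 hdlt1.le
        nlinarith [mul_inv_cancel₀ (ne_of_gt (pow_pos hd n)), pow_pos hd n,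
          inv_pos.mpr (pow_pos hd n)]
      have hreal2 : (β * t) ^ p x ≤ 2 * (d ^ n)⁻¹ := hreal.trans (by linarith)
      have hlog := Real.log_le_log (Real.rpow_pos_of_pos (mul_pos hβ0 ht0) _) hreal2
      rw [Real.log_rpow (mul_pos hβ0 ht0),
        Real.log_mul (ne_of_gt hβ0) (ne_of_gt ht0)] at hlog
      have hlogt : Real.log t = ((n:ℝ) / p y) * L := by
        rw [htdef, Real.log_rpow hd, hLdef, Real.log_inv]; ring
      have hrhs : Real.log (2 * (d ^ n)⁻¹) = Real.log 2 + (n:ℝ) * L := by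
        rw [Real.log_mul two_ne_zero (by positivity), Real.log_inv, Real.log_pow,
          hLdef, Real.log_inv]
        push_cast; ring
      have hBlog : Real.log β = -B := by rw [hBdef, Real.log_inv]; ring
      rw [hBlog, hlogt, hrhs] at hlog
      have hE2 : E ≤ Real.log 2 + L := by
        have hle : Real.exp 1 + 1 / d ≤ 2 * d⁻¹ := by rw [one_div]; linarith
        calc E ≤ Real.log (2 * d⁻¹) := Real.log_le_log (by positivity) hle
          _ = Real.log 2 + L := by
            rw [Real.log_mul two_ne_zero (by positivity), hLdef]
      have hlog' : p x * (-B + (n:ℝ) / p y * L) ≤ Real.log 2 + (n:ℝ) * L := by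
        linarith [hlog]
      rw [hCdef]
      exact arith1 hpx hpy hL1 hE1 hE2 hB0 hn1 hlog'
    · -- d large
      have hdinv : d⁻¹ ≤ Real.exp 1 := by
        have h1 := inv_anti₀ (inv_pos.mpr (Real.exp_pos 1)) (not_lt.mp hsmall)
        rwa [inv_inv] at h1
      have hE2 : E ≤ 1 + Real.log 2 := by
        have hle : Real.exp 1 + 1 / d ≤ Real.exp 1 + Real.exp 1 := by
          rw [one_div]; linarith
        calc E ≤ Real.log (Real.exp 1 + Real.exp 1) :=
              Real.log_le_log (by positivity) hle
          _ = Real.log 2 + 1 := by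
            rw [show Real.exp 1 + Real.exp 1 = 2 * Real.exp 1 by ring,
              Real.log_mul two_ne_zero (Real.exp_pos 1).ne', Real.log_exp]
          _ ≤ 1 + Real.log 2 := by linarith
      rw [hCdef]
      exact arith2 hpx hpy hE1 hE2 hB0 hn1
  refine ⟨C, hC0, fun x hx y hy => ?_⟩
  rw [abs_sub_le_iff]
  refine ⟨?_, key x hx y hy⟩
  have h := key y hy x hx
  rwa [dist_comm y x] at h

private lemma arith3 {px L w z ε nr : ℝ} (hpx : 1 ≤ px) (hL : 0 ≤ L) (hn1 : 1 ≤ nr)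
    (hw0 : 0 ≤ w) (hwε : w < ε / 4) (hε : 0 < ε) (hz0 : 0 ≤ z) (hzw : z ≤ w)
    (hlog : px * (nr * L - z) ≤ nr * L + z) :
    (1 - 1 / px) * L < ε := by
  have hpx0 : (0:ℝ) < px := by linarith
  have hkey : (px - 1) * (nr * L) ≤ (px + 1) * w := by
    have h1 : 0 ≤ (1 + px) * (w - z) := mul_nonneg (by linarith) (by linarith)
    linarith
  have h1 : px * ((1 - 1 / px) * L) = (px - 1) * L := by field_simp
  have h2 : (px - 1) * L ≤ (px - 1) * (nr * L) := by
    nlinarith [mul_nonneg (mul_nonneg (sub_nonneg.2 hpx) hL) (sub_nonneg.2 hn1)]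
  have h3 : (px + 1) * w ≤ 2 * px * w := by
    nlinarith [mul_nonneg (sub_nonneg.2 hpx) hw0]
  have h4 : px * ((1 - 1 / px) * L) < px * ε := by
    nlinarith [mul_lt_mul_of_pos_left hwε (by linarith : (0:ℝ) < 2 * px),
      mul_pos hpx0 hε]
  exact lt_of_mul_lt_mul_left h4 hpx0.le

/-- Forward direction, second part: the restricted (VA1) inequality (with `K = 1`)
implies the strong log-Hölder decay condition at points where `p = 1`. -/
private lemma fwd_SLH (Ω : Set (Euc n)) (p : Euc n → ℝ) (hp : ∀ x ∈ Ω, 1 ≤ p x)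
    (hV : ∃ ω : ℝ → ℝ≥0∞, IsModulus ω ∧
      ∀ x ∈ Ω, ∀ y ∈ Ω,
        (recession (fun x t => ENNReal.ofReal (t ^ p x)) x < ⊤ ∨
         recession (fun x t => ENNReal.ofReal (t ^ p x)) y < ⊤) →
        ∀ t : ℝ, 0 ≤ t →
          ENNReal.ofReal (t ^ p y) ≤ ENNReal.ofReal 1 / ENNReal.ofReal (dist x y ^ n) →
          ENNReal.ofReal ((t * ((1 + ω (dist x y))⁻¹).toReal) ^ p x) ≤
            ENNReal.ofReal (t ^ p y) + ω (dist x y)) :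
    ∀ ε : ℝ, 0 < ε → ∃ δ : ℝ, 0 < δ ∧ ∀ y ∈ Ω, p y = 1 → ∀ x ∈ Ω,
      0 < dist x y → dist x y < δ → |1 - 1 / p x| * Real.log (1 / dist x y) < ε := by
  obtain ⟨ω, ⟨hmono, hω0, htend⟩, hineq⟩ := hV
  intro ε hε
  by_cases hn : n = 0
  · subst hn
    refine ⟨1, one_pos, fun y hy hpy x hx hd _ => ?_⟩
    exfalso
    rw [euc0_eq x y, dist_self] at hd
    exact lt_irrefl 0 hd
  have hn1 : 1 ≤ (n:ℝ) := by exact_mod_cast Nat.one_le_iff_ne_zero.mpr hn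
  have hev : ∀ᶠ d in 𝓝[>] (0:ℝ), ω d < ENNReal.ofReal (ε / 4) := by
    exact htend.eventually_lt_const (ENNReal.ofReal_pos.mpr (by linarith))
  obtain ⟨u, hu, hsub⟩ := mem_nhdsGT_iff_exists_Ioo_subset.mp hev
  refine ⟨min u (Real.exp 1)⁻¹, lt_min hu (inv_pos.mpr (Real.exp_pos 1)), ?_⟩
  intro y hy hpy1 x hx hd hdδ
  have hpx := hp x hx
  have hpx0 : 0 < p x := by linarith
  set d := dist x y with hddef
  have hωd : ω d < ENNReal.ofReal (ε / 4) :=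
    hsub ⟨hd, lt_of_lt_of_le hdδ (min_le_left _ _)⟩
  have hde : d < (Real.exp 1)⁻¹ := lt_of_lt_of_le hdδ (min_le_right _ _)
  have hd1 : d < 1 := by
    refine hde.trans_le ?_
    rw [← Real.exp_neg, ← Real.exp_zero]
    exact Real.exp_le_exp.mpr (by norm_num)
  have hrecy := rec_lt_top (p := p) hpy1
  set t := ((d:ℝ) ^ n)⁻¹ with htdef
  have hdn : 0 < d ^ n := pow_pos hd n
  have ht0 : 0 < t := inv_pos.mpr hdn
  have ht1 : 1 ≤ t := by
    have h1 : d ^ n ≤ 1 := pow_le_one₀ dist_nonneg hd1.le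
    nlinarith [mul_inv_cancel₀ (ne_of_gt hdn), inv_pos.mpr hdn]
  have hprem : ENNReal.ofReal (t ^ p y) ≤ ENNReal.ofReal 1 / ENNReal.ofReal (d ^ n) := by
    rw [hpy1, Real.rpow_one, htdef, ← one_div, ENNReal.ofReal_div_of_pos hdn]
  have hkey := hineq x hx y hy (Or.inr hrecy) t ht0.le hprem
  have hωfin : ω d ≠ ⊤ := (hωd.trans ENNReal.ofReal_lt_top).ne
  have hω'0 : 0 ≤ (ω d).toReal := ENNReal.toReal_nonneg
  have hω'ε : (ω d).toReal < ε / 4 := (ENNReal.lt_ofReal_iff_toReal_lt hωfin).mp hωd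
  have hr : ((1 + ω d)⁻¹).toReal = (1 + (ω d).toReal)⁻¹ := by
    rw [ENNReal.toReal_inv, ENNReal.toReal_add ENNReal.one_ne_top hωfin,
      ENNReal.toReal_one]
  rw [hr, hpy1, Real.rpow_one] at hkey
  nth_rewrite 2 [show ω d = ENNReal.ofReal (ω d).toReal from
    (ENNReal.ofReal_toReal hωfin).symm] at hkey
  rw [← ENNReal.ofReal_add ht0.le hω'0] at hkey
  have hreal : (t * (1 + (ω d).toReal)⁻¹) ^ p x ≤ t + (ω d).toReal :=
    (ENNReal.ofReal_le_ofReal_iff (by positivity)).1 hkey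
  have hw1 : (0:ℝ) < 1 + (ω d).toReal := by linarith
  have hrr0 : 0 < t * (1 + (ω d).toReal)⁻¹ := by positivity
  have hup : t + (ω d).toReal ≤ t * (1 + (ω d).toReal) := by nlinarith
  have hlog := Real.log_le_log (Real.rpow_pos_of_pos hrr0 _) (hreal.trans hup)
  rw [Real.log_rpow hrr0, Real.log_mul (ne_of_gt ht0) (by positivity),
    Real.log_mul (ne_of_gt ht0) (ne_of_gt hw1), Real.log_inv, Real.log_inv] at hlog
  have hdl : Real.log (d ^ n) = -((n:ℝ) * Real.log (1 / d)) := by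
    rw [Real.log_pow, one_div, Real.log_inv]; push_cast; ring
  rw [hdl] at hlog
  have hz0 : 0 ≤ Real.log (1 + (ω d).toReal) := Real.log_nonneg (by linarith)
  have hzw : Real.log (1 + (ω d).toReal) ≤ (ω d).toReal := by
    have := Real.log_le_sub_one_of_pos hw1; linarith
  have hL0 : 0 ≤ Real.log (1 / d) := by
    apply Real.log_nonneg
    rw [one_div]
    nlinarith [mul_inv_cancel₀ (ne_of_gt hd), inv_pos.mpr hd]
  rw [abs_of_nonneg (by rw [sub_nonneg, div_le_one hpx0]; exact hpx : (0:ℝ) ≤ 1 - 1 / p x)]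
  exact arith3 hpx hL0 hn1 hω'0 hω'ε hε hz0 hzw (by linarith [hlog])

private lemma arith4 {px py lt lK ld E C nr : ℝ} (hpy : 1 ≤ py) (hpxy : py < px)
    (hlt : 0 < lt) (hE1 : 1 ≤ E) (hC0 : 0 ≤ C)
    (ha : 1 / py - 1 / px ≤ C / E)
    (hb : py * lt ≤ lK - nr * ld)
    (hld : -ld ≤ E) (hlK : lK ≤ max lK 0 * E) (hnr : 0 ≤ nr) :
    (px - py) * lt ≤ px * (C * (max lK 0 + nr)) := by
  have hpy0 : (0:ℝ) < py := by linarith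
  have hpx0 : (0:ℝ) < px := by linarith
  have hE0 : (0:ℝ) < E := by linarith
  have ha0 : 0 ≤ 1 / py - 1 / px := by
    rw [sub_nonneg]
    exact one_div_le_one_div_of_le hpy0 hpxy.le
  have hb2 : py * lt ≤ (max lK 0 + nr) * E := by
    have h1 := mul_le_mul_of_nonneg_left hld hnr
    linarith [hlK]
  have hid : (px - py) * lt = px * ((1 / py - 1 / px) * (py * lt)) := by
    field_simp
  have h6 : (1 / py - 1 / px) * (py * lt) ≤ (C / E) * ((max lK 0 + nr) * E) :=
    mul_le_mul ha hb2 (mul_nonneg hpy0.le hlt.le) (div_nonneg hC0 hE0.le)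
  have h7 : (C / E) * ((max lK 0 + nr) * E) = C * (max lK 0 + nr) := by
    field_simp
  rw [hid]
  exact mul_le_mul_of_nonneg_left (h6.trans_eq h7) hpx0.le

/-- Backward direction, first part: log-Hölder continuity of `1/p` implies (A1). -/
private lemma bwd_A1 (Ω : Set (Euc n)) (p : Euc n → ℝ) (hp : ∀ x ∈ Ω, 1 ≤ p x)
    {C : ℝ} (hC0 : 0 ≤ C)
    (hC : ∀ x ∈ Ω, ∀ y ∈ Ω,
      |1 / p x - 1 / p y| ≤ C / Real.log (Real.exp 1 + 1 / dist x y)) :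
    A1 Ω (fun x t => ENNReal.ofReal (t ^ p x)) := by
  intro K hK
  set M := C * (max (Real.log K) 0 + (n:ℝ)) with hMdef
  have hM0 : 0 ≤ M :=
    mul_nonneg hC0 (by positivity)
  have hβ1 : Real.exp (-M) ≤ 1 := by
    rw [← Real.exp_zero]
    exact Real.exp_le_exp.mpr (by linarith)
  refine ⟨Real.exp (-M), Real.exp_pos _, hβ1, ?_⟩
  intro x hx y hy t ht hφ
  simp only [] at hφ ⊢
  have hpx := hp x hx
  have hpy := hp y hy
  have hpx0 : (0:ℝ) < p x := by linarith
  have hpy0 : (0:ℝ) < p y := by linarith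
  rcases eq_or_ne x y with hxy | hxy
  · subst hxy
    refine le_trans (ENNReal.ofReal_le_ofReal ?_) le_self_add
    exact Real.rpow_le_rpow (by positivity)
      (mul_le_of_le_one_left ht hβ1) (by linarith)
  have hd : 0 < dist x y := dist_pos.mpr hxy
  have hφ' : t ^ p y ≤ K / dist x y ^ n := by
    rw [← ENNReal.ofReal_div_of_pos (pow_pos hd n)] at hφ
    exact (ENNReal.ofReal_le_ofReal_iff (by positivity)).1 hφ
  rcases le_or_gt t 1 with ht1 | ht1
  · refine le_trans (le_trans (ENNReal.ofReal_le_ofReal ?_) ENNReal.ofReal_one.le) le_add_self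
    exact Real.rpow_le_one (by positivity)
      (mul_le_one₀ hβ1 ht ht1) (by linarith)
  rcases le_or_gt (p x) (p y) with hpxy | hpxy
  · refine le_trans (ENNReal.ofReal_le_ofReal ?_) le_self_add
    calc (Real.exp (-M) * t) ^ p x ≤ t ^ p x :=
          Real.rpow_le_rpow (by positivity) (mul_le_of_le_one_left ht hβ1) (by linarith)
      _ ≤ t ^ p y := Real.rpow_le_rpow_of_exponent_le ht1.le hpxy
  · -- p y < p x
    have ht0 : (0:ℝ) < t := by linarith
    have hlt : 0 < Real.log t := Real.log_pos ht1
    have hE1 : 1 ≤ Real.log (Real.exp 1 + 1 / dist x y) := logE_ge_one dist_nonneg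
    have ha : 1 / p y - 1 / p x ≤ C / Real.log (Real.exp 1 + 1 / dist x y) := by
      have h0 := hC x hx y hy
      have h1 := neg_abs_le (1 / p x - 1 / p y)
      linarith [abs_le.mp h0]
    have hb : p y * Real.log t ≤ Real.log K - (n:ℝ) * Real.log (dist x y) := by
      have h0 : (0:ℝ) < t ^ p y := Real.rpow_pos_of_pos ht0 _
      have h1 := Real.log_le_log h0 hφ'
      rw [Real.log_rpow ht0, Real.log_div (ne_of_gt hK)
        (ne_of_gt (pow_pos hd n)), Real.log_pow] at h1
      push_cast at h1
      linarith
    have hld : -Real.log (dist x y) ≤ Real.log (Real.exp 1 + 1 / dist x y) := by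
      rw [← Real.log_inv]
      apply Real.log_le_log (inv_pos.mpr hd)
      rw [← one_div]
      linarith [Real.exp_pos 1]
    have hlK : Real.log K ≤ max (Real.log K) 0 * Real.log (Real.exp 1 + 1 / dist x y) := by
      have h1 : max (Real.log K) 0 ≤ max (Real.log K) 0 *
          Real.log (Real.exp 1 + 1 / dist x y) :=
        le_mul_of_one_le_right (le_max_right _ _) hE1
      linarith [le_max_left (Real.log K) 0]
    have hkey2 : (p x - p y) * Real.log t ≤ p x * M := by
      rw [hMdef]
      exact arith4 hpy hpxy hlt hE1 hC0 ha hb hld hlK (by positivity)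
    refine le_trans (ENNReal.ofReal_le_ofReal ?_) le_self_add
    rw [Real.rpow_def_of_pos (by positivity), Real.rpow_def_of_pos ht0]
    apply Real.exp_le_exp.mpr
    rw [Real.log_mul (ne_of_gt (Real.exp_pos _)) (ne_of_gt ht0), Real.log_exp]
    nlinarith [hkey2]

private lemma t_sub_rpow {t q : ℝ} (ht0 : 0 ≤ t) (ht1 : t ≤ 1) (hq : 1 ≤ q) :
    t - t ^ q ≤ q - 1 := by
  rcases eq_or_lt_of_le ht0 with h0 | h0
  · rw [← h0, Real.zero_rpow (by linarith : q ≠ 0)]; linarith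
  have hsplit : t ^ q = t * t ^ (q - 1) := by
    have h1 := Real.rpow_add h0 1 (q - 1)
    rw [show (1:ℝ) + (q - 1) = q by ring, Real.rpow_one] at h1
    exact h1
  have hlog1 : 1 - t ^ (q - 1) ≤ (q - 1) * (-Real.log t) := by
    have h2 := Real.add_one_le_exp (Real.log t * (q - 1))
    rw [← Real.rpow_def_of_pos h0] at h2
    nlinarith [h2]
  have hlogt : t * (-Real.log t) ≤ 1 := by
    have h2 := Real.log_le_sub_one_of_pos (inv_pos.mpr h0)
    rw [Real.log_inv] at h2
    have h3 : t * (-Real.log t) ≤ t * (t⁻¹ - 1) :=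
      mul_le_mul_of_nonneg_left h2 ht0
    have h4 : t * (t⁻¹ - 1) = 1 - t := by
      field_simp
    linarith
  have hc : t - t ^ q = t * (1 - t ^ (q - 1)) := by rw [hsplit]; ring
  rw [hc]
  calc t * (1 - t ^ (q - 1)) ≤ t * ((q - 1) * (-Real.log t)) :=
        mul_le_mul_of_nonneg_left hlog1 ht0
    _ = (q - 1) * (t * (-Real.log t)) := by ring
    _ ≤ (q - 1) * 1 := mul_le_mul_of_nonneg_left hlogt (by linarith)
    _ = q - 1 := mul_one _

private lemma arith5 {q L eps1 lK r nr M : ℝ} (hq1 : 1 ≤ q) (hL : max 1 (2 * eps1) ≤ L)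
    (heps1 : 0 < eps1) (hql : (1 - 1 / q) * L < eps1)
    (h2 : eps1 ≤ r / 4) (h3 : eps1 * (2 * max lK 0 + 2 * nr + 2) ≤ Real.log (1 + r / 2))
    (hr : 0 < r) (hnr : 0 ≤ nr) (hM : 0 ≤ M) (hM2 : M ≤ max lK 0 + nr * L) :
    (Real.exp ((q - 1) * M) - 1) + (q - 1) ≤ r := by
  have hL1 : 1 ≤ L := le_trans (le_max_left _ _) hL
  have hL2 : 2 * eps1 ≤ L := le_trans (le_max_right _ _) hL
  have hq0 : (0:ℝ) < q := by linarith
  have hL0 : (0:ℝ) < L := by linarith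
  have hiq : 0 ≤ 1 - 1 / q := by
    rw [sub_nonneg, div_le_one hq0]; exact hq1
  have hq2 : q ≤ 2 := by
    by_contra hq2
    push_neg at hq2
    have h5 : (1:ℝ) / 2 < 1 - 1 / q := by
      have := one_div_lt_one_div_of_lt (by norm_num : (0:ℝ) < 2) hq2
      linarith
    have h6 := mul_lt_mul_of_pos_right h5 hL0
    linarith
  have hqL : (q - 1) * L ≤ 2 * eps1 := by
    have hid : (q - 1) * L = q * ((1 - 1 / q) * L) := by field_simp
    have h0 : 0 ≤ (1 - 1 / q) * L := mul_nonneg hiq hL0.le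
    have h7 : q * ((1 - 1 / q) * L) ≤ 2 * ((1 - 1 / q) * L) := by nlinarith
    rw [hid]
    linarith
  have hq1' : q - 1 ≤ 2 * eps1 := by
    nlinarith [mul_nonneg (by linarith : (0:ℝ) ≤ q - 1) (by linarith : (0:ℝ) ≤ L - 1)]
  have hexp_arg : (q - 1) * M ≤ eps1 * (2 * max lK 0 + 2 * nr + 2) := by
    have e1 : (q - 1) * M ≤ (q - 1) * (max lK 0 + nr * L) :=
      mul_le_mul_of_nonneg_left hM2 (by linarith)
    have e2 : (q - 1) * max lK 0 ≤ 2 * eps1 * max lK 0 :=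
      mul_le_mul_of_nonneg_right hq1' (le_max_right lK 0)
    have e3 : nr * ((q - 1) * L) ≤ nr * (2 * eps1) := mul_le_mul_of_nonneg_left hqL hnr
    nlinarith [e1, e2, e3]
  have hexp : Real.exp ((q - 1) * M) ≤ 1 + r / 2 := by
    have h4 := Real.exp_le_exp.mpr (hexp_arg.trans h3)
    rwa [Real.exp_log (by linarith)] at h4
  linarith

/-- The defect function used to build the modulus of continuity. -/
private def Gfun (p : Euc n → ℝ) (K : ℝ) (x y : Euc n) : ℝ :=
  (Real.exp ((max (p x) (p y) - 1) * max (Real.log K - n * Real.log (dist x y)) 0) - 1)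
    + (max (p x) (p y) - 1)

/-- Admissible pairs at scale `dd`. -/
private def Adm (Ω : Set (Euc n)) (p : Euc n → ℝ) (dd : ℝ) : Set (Euc n × Euc n) :=
  {z | z.1 ∈ Ω ∧ z.2 ∈ Ω ∧ (p z.1 = 1 ∨ p z.2 = 1) ∧ 0 < dist z.1 z.2 ∧ dist z.1 z.2 ≤ dd}

/-- The modulus of continuity for the restricted (VA1) condition. -/
private def omegaFun (Ω : Set (Euc n)) (p : Euc n → ℝ) (K : ℝ) (dd : ℝ) : ℝ≥0∞ :=
  ⨆ z : Adm Ω p dd, ENNReal.ofReal (Gfun p K z.1.1 z.1.2)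

/-- Backward direction, second part: the strong log-Hölder decay condition implies
the restricted (VA1) inequality. -/
private lemma bwd_VA1 (Ω : Set (Euc n)) (p : Euc n → ℝ) (hp : ∀ x ∈ Ω, 1 ≤ p x)
    (hs : ∀ ε : ℝ, 0 < ε → ∃ δ : ℝ, 0 < δ ∧ ∀ y ∈ Ω, p y = 1 → ∀ x ∈ Ω,
      0 < dist x y → dist x y < δ → |1 - 1 / p x| * Real.log (1 / dist x y) < ε)
    (K : ℝ) (hK : 0 < K) :
    ∃ ω : ℝ → ℝ≥0∞, IsModulus ω ∧
      ∀ x ∈ Ω, ∀ y ∈ Ω,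
        (recession (fun x t => ENNReal.ofReal (t ^ p x)) x < ⊤ ∨
         recession (fun x t => ENNReal.ofReal (t ^ p x)) y < ⊤) →
        ∀ t : ℝ, 0 ≤ t →
          ENNReal.ofReal (t ^ p y) ≤ ENNReal.ofReal K / ENNReal.ofReal (dist x y ^ n) →
          ENNReal.ofReal ((t * ((1 + ω (dist x y))⁻¹).toReal) ^ p x) ≤
            ENNReal.ofReal (t ^ p y) + ω (dist x y) := by
  have hmono : ∀ s t : ℝ, 0 ≤ s → s ≤ t → omegaFun Ω p K s ≤ omegaFun Ω p K t := by
    intro s t _ hst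
    refine iSup_le fun z => ?_
    obtain ⟨h1, h2, h3, h4, h5⟩ := z.2
    exact le_iSup_of_le (⟨z.1, h1, h2, h3, h4, h5.trans hst⟩ : Adm Ω p t) le_rfl
  have hω0 : omegaFun Ω p K 0 = 0 := by
    have hemp : IsEmpty (Adm Ω p 0) := by
      refine ⟨fun z => ?_⟩
      obtain ⟨_, _, _, h4, h5⟩ := z.2
      exact absurd (h4.trans_le h5) (lt_irrefl 0)
    rw [omegaFun, iSup_of_empty]
    rfl
  have htend : Tendsto (omegaFun Ω p K) (𝓝[>] (0:ℝ)) (𝓝 0) := by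
    rw [ENNReal.tendsto_nhds_zero]
    intro ε hε
    have hmin_ne : min 1 ε ≠ ⊤ := ne_top_of_le_ne_top ENNReal.one_ne_top (min_le_left _ _)
    set r := (min 1 ε).toReal with hrdef
    have hr0 : 0 < r := ENNReal.toReal_pos (lt_min one_pos hε).ne' hmin_ne
    have hofr : ENNReal.ofReal r ≤ ε := by
      rw [hrdef, ENNReal.ofReal_toReal hmin_ne]; exact min_le_right _ _
    set A := 2 * max (Real.log K) 0 + 2 * (n:ℝ) + 2 with hAdef
    have hA0 : 0 < A := by positivity
    have hlogr : 0 < Real.log (1 + r / 2) := Real.log_pos (by linarith)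
    set ε₁ := min (r / 4) (Real.log (1 + r / 2) / A) with hε₁def
    have hε₁0 : 0 < ε₁ := lt_min (by linarith) (div_pos hlogr hA0)
    obtain ⟨δ₁, hδ₁0, hδ₁⟩ := hs ε₁ hε₁0
    set δ := min δ₁ (Real.exp (-(max 1 (2 * ε₁)))) with hδdef
    have hδ0 : 0 < δ := lt_min hδ₁0 (Real.exp_pos _)
    filter_upwards [Ioo_mem_nhdsGT_of_mem (⟨le_refl (0:ℝ), hδ0⟩ : (0:ℝ) ∈ Ico 0 δ)]
      with dd hdd
    refine le_trans (iSup_le fun z => ?_) hofr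
    obtain ⟨hxΩ, hyΩ, horr, hD0, hDd⟩ := z.2
    have hD : dist z.1.1 z.1.2 < δ := lt_of_le_of_lt hDd hdd.2
    apply ENNReal.ofReal_le_ofReal
    rw [Gfun]
    have hpxx := hp _ hxΩ
    have hpyy := hp _ hyΩ
    obtain ⟨q, hqdef⟩ : ∃ q : ℝ, q = max (p z.1.1) (p z.1.2) := ⟨_, rfl⟩
    rw [← hqdef]
    have hq1 : 1 ≤ q := by rw [hqdef]; exact le_trans hpxx (le_max_left _ _)
    have hql : (1 - 1 / q) * Real.log (1 / dist z.1.1 z.1.2) < ε₁ := by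
      rcases horr with h1 | h1
      · have hqe : q = p z.1.2 := by rw [hqdef, h1]; exact max_eq_right hpyy
        have h6 := hδ₁ z.1.1 hxΩ h1 z.1.2 hyΩ (by rw [dist_comm]; exact hD0)
          (by rw [dist_comm]; exact lt_of_lt_of_le hD (min_le_left _ _))
        rw [dist_comm z.1.2 z.1.1, abs_of_nonneg
          (by rw [sub_nonneg, div_le_one (by linarith : (0:ℝ) < p z.1.2)]; exact hpyy)] at h6
        rwa [hqe]
      · have hqe : q = p z.1.1 := by rw [hqdef, h1]; exact max_eq_left hpxx
        have h6 := hδ₁ z.1.2 hyΩ h1 z.1.1 hxΩ hD0 (lt_of_lt_of_le hD (min_le_left _ _))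
        rw [abs_of_nonneg
          (by rw [sub_nonneg, div_le_one (by linarith : (0:ℝ) < p z.1.1)]; exact hpxx)] at h6
        rwa [hqe]
    have hL : max 1 (2 * ε₁) ≤ Real.log (1 / dist z.1.1 z.1.2) := by
      have h2 : dist z.1.1 z.1.2 < Real.exp (-(max 1 (2 * ε₁))) :=
        lt_of_lt_of_le hD (min_le_right _ _)
      have h3 : Real.exp (max 1 (2 * ε₁)) ≤ 1 / dist z.1.1 z.1.2 := by
        rw [one_div]
        have h4 := mul_lt_mul_of_pos_left h2 (Real.exp_pos (max 1 (2 * ε₁)))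
        rw [← Real.exp_add] at h4
        simp only [add_neg_cancel, Real.exp_zero] at h4
        nlinarith [mul_inv_cancel₀ (ne_of_gt hD0), inv_pos.mpr hD0,
          Real.exp_pos (max 1 (2 * ε₁))]
      calc max 1 (2 * ε₁) = Real.log (Real.exp (max 1 (2 * ε₁))) := (Real.log_exp _).symm
        _ ≤ _ := Real.log_le_log (Real.exp_pos _) h3
    have hLpos : 0 < Real.log (1 / dist z.1.1 z.1.2) := by
      have := le_max_left (1:ℝ) (2 * ε₁); linarith
    have hM2 : max (Real.log K - (n:ℝ) * Real.log (dist z.1.1 z.1.2)) 0 ≤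
        max (Real.log K) 0 + (n:ℝ) * Real.log (1 / dist z.1.1 z.1.2) := by
      apply max_le
      · have e : Real.log K - (n:ℝ) * Real.log (dist z.1.1 z.1.2) =
            Real.log K + (n:ℝ) * Real.log (1 / dist z.1.1 z.1.2) := by
          rw [one_div, Real.log_inv]; ring
        rw [e]
        have := le_max_left (Real.log K) 0
        linarith
      · have h7 := mul_nonneg (by positivity : (0:ℝ) ≤ (n:ℝ)) hLpos.le
        linarith [le_max_right (Real.log K) 0]
    exact arith5 hq1 hL hε₁0 hql (min_le_left _ _)
      ((le_div_iff₀ hA0).mp (min_le_right _ _)) hr0 (by positivity)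
      (le_max_right _ _) hM2
  refine ⟨omegaFun Ω p K, ⟨hmono, hω0, htend⟩, ?_⟩
  intro x hx y hy hrec t ht hφt
  have hpx := hp x hx
  have hpy := hp y hy
  have hpx0 : (0:ℝ) < p x := by linarith
  have hor : p x = 1 ∨ p y = 1 := by
    rcases hrec with h | h
    · exact Or.inl (rec_finite_imp hpx h)
    · exact Or.inr (rec_finite_imp hpy h)
  rcases eq_or_ne x y with hxy | hxy
  · subst hxy
    rw [dist_self, hω0]
    simp
  have hd : 0 < dist x y := dist_pos.mpr hxy
  have hGω : ENNReal.ofReal (Gfun p K x y) ≤ omegaFun Ω p K (dist x y) :=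
    le_iSup_of_le (⟨(x, y), hx, hy, hor, hd, le_rfl⟩ : Adm Ω p (dist x y)) le_rfl
  rcases eq_or_ne (omegaFun Ω p K (dist x y)) ⊤ with hωtop | hωfin
  · rw [hωtop]
    simp
  set w := (omegaFun Ω p K (dist x y)).toReal with hwdef
  have hw0 : 0 ≤ w := ENNReal.toReal_nonneg
  have hw1 : (0:ℝ) < 1 + w := by linarith
  have hG : Gfun p K x y ≤ w := (ENNReal.ofReal_le_iff_le_toReal hωfin).1 hGω
  have hr : ((1 + omegaFun Ω p K (dist x y))⁻¹).toReal = (1 + w)⁻¹ := by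
    rw [ENNReal.toReal_inv, ENNReal.toReal_add ENNReal.one_ne_top hωfin, ENNReal.toReal_one]
  have hRHS : ENNReal.ofReal (t ^ p y) + omegaFun Ω p K (dist x y) =
      ENNReal.ofReal (t ^ p y + w) := by
    rw [← ENNReal.ofReal_toReal hωfin, ← hwdef,
      ← ENNReal.ofReal_add (Real.rpow_nonneg ht _) hw0]
  rw [hr, hRHS]
  apply ENNReal.ofReal_le_ofReal
  -- now a real inequality : (t * (1+w)⁻¹) ^ p x ≤ t ^ p y + w
  have hty : t ^ p y ≤ K / dist x y ^ n := by
    rw [← ENNReal.ofReal_div_of_pos (pow_pos hd n)] at hφt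
    exact (ENNReal.ofReal_le_ofReal_iff (by positivity)).1 hφt
  obtain ⟨q, hqdef⟩ : ∃ q : ℝ, q = max (p x) (p y) := ⟨_, rfl⟩
  obtain ⟨Mx, hMxdef⟩ : ∃ Mx : ℝ,
      Mx = max (Real.log K - (n:ℝ) * Real.log (dist x y)) 0 := ⟨_, rfl⟩
  have hq1 : 1 ≤ q := by rw [hqdef]; exact le_trans hpx (le_max_left _ _)
  have hMx0 : 0 ≤ Mx := by rw [hMxdef]; exact le_max_right _ _
  have hGexpand : Gfun p K x y = (Real.exp ((q - 1) * Mx) - 1) + (q - 1) := by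
    rw [Gfun, hqdef, hMxdef]
  have hexp1 : 1 ≤ Real.exp ((q - 1) * Mx) := by
    have h9 := Real.add_one_le_exp ((q - 1) * Mx)
    nlinarith [mul_nonneg (by linarith : (0:ℝ) ≤ q - 1) hMx0]
  have hwq : q - 1 ≤ w := by
    rw [hGexpand] at hG; linarith
  have hwe : Real.exp ((q - 1) * Mx) - 1 ≤ w := by
    rw [hGexpand] at hG; linarith
  have hinv1 : (1 + w)⁻¹ ≤ 1 := by
    nlinarith [mul_inv_cancel₀ (ne_of_gt hw1), inv_pos.mpr hw1]
  have hs1 : t * (1 + w)⁻¹ ≤ t := mul_le_of_le_one_right ht hinv1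
  have hs0 : 0 ≤ t * (1 + w)⁻¹ := mul_nonneg ht (inv_pos.mpr hw1).le
  rcases hor with hpx1 | hpy1
  · -- case p x = 1
    rw [hpx1, Real.rpow_one]
    rcases le_or_gt 1 t with ht1 | ht1
    · have h8 : t ≤ t ^ p y := by
        calc t = t ^ (1:ℝ) := (Real.rpow_one t).symm
          _ ≤ t ^ p y := Real.rpow_le_rpow_of_exponent_le ht1 hpy
      linarith
    · have h8 : t - t ^ p y ≤ p y - 1 := t_sub_rpow ht ht1.le hpy
      have h9 : p y ≤ q := by rw [hqdef]; exact le_max_right _ _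
      linarith
  · -- case p y = 1
    rcases le_or_gt t 1 with ht1 | ht1
    · have hsp : (t * (1 + w)⁻¹) ^ p x ≤ t * (1 + w)⁻¹ := by
        rcases eq_or_lt_of_le hs0 with h0 | h0
        · rw [← h0, Real.zero_rpow (by linarith : p x ≠ 0)]
        · calc (t * (1 + w)⁻¹) ^ p x ≤ (t * (1 + w)⁻¹) ^ (1:ℝ) :=
              Real.rpow_le_rpow_of_exponent_ge h0 (hs1.trans ht1) hpx
            _ = t * (1 + w)⁻¹ := Real.rpow_one _
      rw [hpy1, Real.rpow_one]
      linarith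
    · -- t > 1
      have ht0' : (0:ℝ) < t := by linarith
      have htK : t ≤ K / dist x y ^ n := by
        have h8 := hty
        rw [hpy1, Real.rpow_one] at h8
        exact h8
      have hqx : q = p x := by rw [hqdef, hpy1]; exact max_eq_left hpx
      have hlogt : Real.log t ≤ Real.log K - (n:ℝ) * Real.log (dist x y) := by
        have h8 := Real.log_le_log ht0' htK
        rw [Real.log_div (ne_of_gt hK) (ne_of_gt (pow_pos hd n)), Real.log_pow] at h8
        push_cast at h8
        linarith
      have hMxb : Real.log t ≤ Mx := by
        rw [hMxdef]; exact le_trans hlogt (le_max_left _ _)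
      have hte : t ^ (p x - 1) ≤ 1 + w := by
        rw [Real.rpow_def_of_pos ht0']
        have harg : Real.log t * (p x - 1) ≤ (q - 1) * Mx := by
          rw [hqx]
          calc Real.log t * (p x - 1) ≤ Mx * (p x - 1) :=
                mul_le_mul_of_nonneg_right hMxb (by linarith)
            _ = (p x - 1) * Mx := by ring
        have h9 := Real.exp_le_exp.mpr harg
        linarith [hwe]
      have hsplit : (t * (1 + w)⁻¹) ^ p x = t ^ p x * ((1 + w) ^ p x)⁻¹ := by
        rw [Real.mul_rpow ht0'.le (inv_pos.mpr hw1).le, ← Real.inv_rpow hw1.le]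
      have htpx : t ^ p x = t * t ^ (p x - 1) := by
        have h9 := Real.rpow_add ht0' 1 (p x - 1)
        rw [show (1:ℝ) + (p x - 1) = p x by ring, Real.rpow_one] at h9
        exact h9
      have hup : t ^ p x ≤ t * (1 + w) := by
        rw [htpx]
        exact mul_le_mul_of_nonneg_left hte (by linarith)
      have hpow1 : 1 + w ≤ (1 + w) ^ p x := by
        calc 1 + w = (1 + w) ^ (1:ℝ) := (Real.rpow_one _).symm
          _ ≤ (1 + w) ^ p x := Real.rpow_le_rpow_of_exponent_le (by linarith) hpx
      have hppos : (0:ℝ) < (1 + w) ^ p x := Real.rpow_pos_of_pos hw1 _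
      rw [hsplit, hpy1, Real.rpow_one]
      have hc1 : t ^ p x * ((1 + w) ^ p x)⁻¹ ≤ (t * (1 + w) ^ p x) * ((1 + w) ^ p x)⁻¹ := by
        apply mul_le_mul_of_nonneg_right _ (inv_pos.mpr hppos).le
        calc t ^ p x ≤ t * (1 + w) := hup
          _ ≤ t * (1 + w) ^ p x := mul_le_mul_of_nonneg_left hpow1 ht0'.le
      have hc2 : (t * (1 + w) ^ p x) * ((1 + w) ^ p x)⁻¹ = t := by
        rw [mul_assoc, mul_inv_cancel₀ (ne_of_gt hppos), mul_one]
      linarith [hc1, hc2.le, hc2.ge]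

/-- For the variable exponent energy `φ(x,t) = t^{p(x)}` with
`p : Ω → [1,∞)`, restricted (VA1) is equivalent to strong log-Hölder continuity of `1/p`. -/
theorem statement0 (n : ℕ) (Ω : Set (Euc n)) (hΩ : IsBoundedDomain Ω)
    (p : Euc n → ℝ) (hp : ∀ x ∈ Ω, 1 ≤ p x) :
    RestrictedVA1 Ω (fun x t => ENNReal.ofReal (t ^ p x)) ↔
      ((∃ C : ℝ, 0 ≤ C ∧ ∀ x ∈ Ω, ∀ y ∈ Ω,
          |1 / p x - 1 / p y| ≤ C / Real.log (Real.exp 1 + 1 / dist x y)) ∧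
        (∀ ε : ℝ, 0 < ε → ∃ δ : ℝ, 0 < δ ∧ ∀ y ∈ Ω, p y = 1 → ∀ x ∈ Ω,
          0 < dist x y → dist x y < δ →
          |1 - 1 / p x| * Real.log (1 / dist x y) < ε)) := by
  constructor
  · rintro ⟨hA1, hVp⟩
    exact ⟨fwd_LH Ω p hp hA1, fwd_SLH Ω p hp (hVp 1 one_pos)⟩
  · rintro ⟨⟨C, hC0, hC⟩, hsl⟩
    exact ⟨bwd_A1 Ω p hp hC0 hC, fun K hK => bwd_VA1 Ω p hp hsl K hK⟩

end
end

section
/- If φ ∈ Φ_w(Ω), then ρ_{V,φ} is a left-continuous semimodular on L¹(Ω): ρ_{V,φ}(0) = 0; λ ↦ ρ_{V,φ}(λu) is increasing on [0,∞) for every u ∈ L¹(Ω); ρ_{V,φ}(−u) = ρ_{V,φ}(u); ρ_{V,φ}(θu + (1−θ)v) ≤ θ ρ_{V,φ}(u) + (1−θ) ρ_{V,φ}(v) for all u,v ∈ L¹(Ω) and θ ∈ [0,1]; and lim_{λ→1⁻} ρ_{V,φ}(λu) = ρ_{V,φ}(u) for every u ∈ L¹(Ω). -/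
open MeasureTheory Filter Set Topology Metric
open scoped ENNReal NNReal

noncomputable section

variable {n : ℕ}

section Aux

variable {Ω : Set (Euc n)} {φ : Euc n → ℝ → ℝ≥0∞}

lemma isTestField_smul {w : Euc n → Euc n} (hw : IsTestField Ω w) (c : ℝ) :
    IsTestField Ω (fun x => c • w x) := by
  obtain ⟨h1, h2, h3⟩ := hw
  have hsupp : Function.support (fun x => c • w x) ⊆ Function.support w := by
    intro x hx
    simp only [Function.mem_support] at hx ⊢
    intro h; exact hx (by rw [h, smul_zero])
  have hts : tsupport (fun x => c • w x) ⊆ tsupport w := closure_mono hsupp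
  exact ⟨h1.const_smul c, h2.of_isClosed_subset (isClosed_tsupport _) hts, hts.trans h3⟩

lemma divg_smul {w : Euc n → Euc n} (hw : ContDiff ℝ 1 w) (c : ℝ) (x : Euc n) :
    divg (fun y => c • w y) x = c * divg w x := by
  have hd : DifferentiableAt ℝ w x := (hw.differentiable one_ne_zero).differentiableAt
  unfold divg
  rw [Finset.mul_sum]
  refine Finset.sum_congr rfl fun i _ => ?_
  rw [fderiv_fun_const_smul hd c]
  rfl

lemma conj_mono (φ : Euc n → ℝ → ℝ≥0∞) (x : Euc n) {s t : ℝ} (h : s ≤ t) :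
    conj φ x s ≤ conj φ x t :=
  iSup_mono fun a =>
    tsub_le_tsub_right (ENNReal.ofReal_le_ofReal (mul_le_mul_of_nonneg_left h a.2)) _

lemma vmodular_mono {w₁ w₂ : Euc n → Euc n} (h : ∀ x, ‖w₁ x‖ ≤ ‖w₂ x‖) :
    vmodular Ω (conj φ) w₁ ≤ vmodular Ω (conj φ) w₂ :=
  lintegral_mono fun x => conj_mono φ x (h x)

lemma rhoV_le {u : Euc n → ℝ} {X : ℝ≥0∞}
    (h : ∀ w, IsTestField Ω w →
      ENNReal.ofReal (∫ x in Ω, u x * divg w x) - vmodular Ω (conj φ) w ≤ X) :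
    rhoV Ω φ u ≤ X :=
  iSup₂_le h

lemma le_rhoV {u : Euc n → ℝ} {w : Euc n → Euc n} (hw : IsTestField Ω w) :
    ENNReal.ofReal (∫ x in Ω, u x * divg w x) - vmodular Ω (conj φ) w ≤ rhoV Ω φ u :=
  le_iSup₂ (f := fun w (_ : w ∈ {w | IsTestField Ω w}) =>
    ENNReal.ofReal (∫ x in Ω, u x * divg w x) - vmodular Ω (conj φ) w) w hw

lemma rhoV_le_of {u v : Euc n → ℝ}
    (h : ∀ w, IsTestField Ω w → ∃ w', IsTestField Ω w' ∧
      (∫ x in Ω, u x * divg w x) = (∫ x in Ω, v x * divg w' x) ∧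
      vmodular Ω (conj φ) w' ≤ vmodular Ω (conj φ) w) :
    rhoV Ω φ u ≤ rhoV Ω φ v := by
  refine rhoV_le fun w hw => ?_
  obtain ⟨w', hw', hint, hmod⟩ := h w hw
  calc ENNReal.ofReal (∫ x in Ω, u x * divg w x) - vmodular Ω (conj φ) w
      ≤ ENNReal.ofReal (∫ x in Ω, v x * divg w' x) - vmodular Ω (conj φ) w' := by
        rw [hint]; exact tsub_le_tsub_left hmod _
    _ ≤ rhoV Ω φ v := le_rhoV hw'

lemma rhoV_smul_mono (φ : Euc n → ℝ → ℝ≥0∞) (u : Euc n → ℝ) {a b : ℝ} (ha : 0 ≤ a)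
    (hab : a ≤ b) : rhoV Ω φ (fun x => a * u x) ≤ rhoV Ω φ (fun x => b * u x) := by
  rcases eq_or_lt_of_le (ha.trans hab) with hb | hb
  · have haz : a = 0 := le_antisymm (hab.trans hb.symm.le) ha
    rw [haz, ← hb]
  · refine rhoV_le_of fun w hw => ⟨fun x => (a / b) • w x, isTestField_smul hw _, ?_, ?_⟩
    · refine integral_congr_ae (Eventually.of_forall fun x => ?_)
      dsimp only
      rw [divg_smul hw.1]
      field_simp
    · refine vmodular_mono fun x => ?_
      rw [norm_smul]
      calc ‖(a / b : ℝ)‖ * ‖w x‖ ≤ 1 * ‖w x‖ := by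
            refine mul_le_mul_of_nonneg_right ?_ (norm_nonneg _)
            rw [Real.norm_eq_abs, abs_of_nonneg (div_nonneg ha hb.le)]
            exact (div_le_one hb).mpr hab
        _ = ‖w x‖ := one_mul _

lemma rhoV_neg_le (φ : Euc n → ℝ → ℝ≥0∞) (u : Euc n → ℝ) :
    rhoV Ω φ (fun x => -u x) ≤ rhoV Ω φ u := by
  refine rhoV_le_of fun w hw => ⟨fun x => (-1 : ℝ) • w x, isTestField_smul hw _, ?_, ?_⟩
  · refine integral_congr_ae (Eventually.of_forall fun x => ?_)
    dsimp only
    rw [divg_smul hw.1]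
    ring
  · refine vmodular_mono fun x => ?_
    rw [norm_smul]
    simp

lemma divg_continuous {w : Euc n → Euc n} (hw : ContDiff ℝ 1 w) : Continuous (divg w) := by
  unfold divg
  refine continuous_finset_sum _ fun i _ => ?_
  have hG : Continuous fun x => fderiv ℝ w x (EuclideanSpace.single i 1) :=
    (hw.continuous_fderiv one_ne_zero).clm_apply continuous_const
  exact (EuclideanSpace.proj (𝕜 := ℝ) i).continuous.comp hG

lemma divg_support {w : Euc n → Euc n} : Function.support (divg w) ⊆ tsupport w := by
  intro x hx
  by_contra h
  rw [Function.mem_support] at hx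
  apply hx
  have h0 : w =ᶠ[𝓝 x] 0 := notMem_tsupport_iff_eventuallyEq.mp h
  have hf : fderiv ℝ w x = fderiv ℝ (0 : Euc n → Euc n) x := h0.fderiv_eq
  unfold divg
  rw [hf, show fderiv ℝ (0 : Euc n → Euc n) x = 0 from by
    rw [show (0 : Euc n → Euc n) = fun _ : Euc n => (0 : Euc n) from rfl, fderiv_fun_const]; rfl]
  simp

lemma integrable_mul_divg {u : Euc n → ℝ} (hu : Integrable u (volume.restrict Ω))
    {w : Euc n → Euc n} (hw : IsTestField Ω w) :
    Integrable (fun x => u x * divg w x) (volume.restrict Ω) := by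
  have hc := divg_continuous hw.1
  have hcs : HasCompactSupport (divg w) :=
    hw.2.1.of_isClosed_subset (isClosed_tsupport _)
      (closure_minimal divg_support (isClosed_tsupport w))
  obtain ⟨C, hC⟩ := hcs.exists_bound_of_continuous hc
  exact (hu.bdd_mul hc.aestronglyMeasurable (Eventually.of_forall hC)).congr
    (Eventually.of_forall fun x => mul_comm _ _)

end Aux

/-- If `φ ∈ Φ_w(Ω)`, then `ρ_{V,φ}` is a left-continuous semimodular
on `L¹(Ω)`. -/
theorem statement5 (n : ℕ) (Ω : Set (Euc n)) (hΩ : IsBoundedDomain Ω)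
    (φ : Euc n → ℝ → ℝ≥0∞) (hφ : IsWeakPhi Ω φ) :
    rhoV Ω φ (fun _ => 0) = 0 ∧
    (∀ u : Euc n → ℝ, Integrable u (volume.restrict Ω) →
      ∀ a b : ℝ, 0 ≤ a → a ≤ b →
        rhoV Ω φ (fun x => a * u x) ≤ rhoV Ω φ (fun x => b * u x)) ∧
    (∀ u : Euc n → ℝ, Integrable u (volume.restrict Ω) →
      rhoV Ω φ (fun x => -u x) = rhoV Ω φ u) ∧
    (∀ u v : Euc n → ℝ, Integrable u (volume.restrict Ω) →
      Integrable v (volume.restrict Ω) → ∀ θ : ℝ, θ ∈ Icc (0 : ℝ) 1 →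
        rhoV Ω φ (fun x => θ * u x + (1 - θ) * v x)
          ≤ ENNReal.ofReal θ * rhoV Ω φ u + ENNReal.ofReal (1 - θ) * rhoV Ω φ v) ∧
    (∀ u : Euc n → ℝ, Integrable u (volume.restrict Ω) →
      Tendsto (fun l : ℝ => rhoV Ω φ (fun x => l * u x)) (𝓝[<] (1 : ℝ))
        (𝓝 (rhoV Ω φ u))) := by
  refine ⟨?_, ?_, ?_, ?_, ?_⟩
  · -- ρ(0) = 0
    refine le_antisymm (rhoV_le fun w hw => ?_) zero_le
    simp [zero_tsub]
  · -- monotone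
    intro u _ a b ha hab
    exact rhoV_smul_mono φ u ha hab
  · -- symmetric
    intro u _
    refine le_antisymm (rhoV_neg_le φ u) ?_
    have h := rhoV_neg_le (Ω := Ω) φ (fun x => -u x)
    refine le_trans (le_of_eq ?_) h
    exact congrArg (rhoV Ω φ) (funext fun x => (neg_neg (u x)).symm)
  · -- convex
    intro u v hu hv θ hθ
    obtain ⟨hθ0, hθ1⟩ := hθ
    refine rhoV_le fun w hw => ?_
    set A := ∫ x in Ω, u x * divg w x with hA
    set B := ∫ x in Ω, v x * divg w x with hB
    set M := vmodular Ω (conj φ) w with hM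
    have h1 := integrable_mul_divg hu hw
    have h2 := integrable_mul_divg hv hw
    have hI : (∫ x in Ω, (θ * u x + (1 - θ) * v x) * divg w x) = θ * A + (1 - θ) * B := by
      calc (∫ x in Ω, (θ * u x + (1 - θ) * v x) * divg w x)
          = ∫ x in Ω, (θ * (u x * divg w x) + (1 - θ) * (v x * divg w x)) :=
            integral_congr_ae (Eventually.of_forall fun x => by ring)
        _ = θ * A + (1 - θ) * B := by
            rw [integral_add (h1.const_mul θ) (h2.const_mul (1 - θ)),
              integral_const_mul, integral_const_mul]
    rw [hI]
    have hsplit : M = ENNReal.ofReal θ * M + ENNReal.ofReal (1 - θ) * M := by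
      rw [← add_mul, ← ENNReal.ofReal_add hθ0 (by linarith)]
      norm_num
    have mulsub : ∀ c X : ℝ≥0∞, c * X - c * M ≤ c * (X - M) := fun c X => by
      rw [tsub_le_iff_right, ← mul_add]
      exact mul_le_mul_right le_tsub_add c
    calc ENNReal.ofReal (θ * A + (1 - θ) * B) - M
        ≤ (ENNReal.ofReal θ * ENNReal.ofReal A + ENNReal.ofReal (1 - θ) * ENNReal.ofReal B)
            - (ENNReal.ofReal θ * M + ENNReal.ofReal (1 - θ) * M) := by
          rw [← hsplit]
          refine tsub_le_tsub_right ?_ M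
          calc ENNReal.ofReal (θ * A + (1 - θ) * B)
              ≤ ENNReal.ofReal (θ * A) + ENNReal.ofReal ((1 - θ) * B) := ENNReal.ofReal_add_le
            _ = _ := by rw [ENNReal.ofReal_mul hθ0, ENNReal.ofReal_mul (by linarith : (0:ℝ) ≤ 1 - θ)]
      _ ≤ (ENNReal.ofReal θ * ENNReal.ofReal A - ENNReal.ofReal θ * M)
            + (ENNReal.ofReal (1 - θ) * ENNReal.ofReal B - ENNReal.ofReal (1 - θ) * M) :=
          add_tsub_add_le_tsub_add_tsub
      _ ≤ ENNReal.ofReal θ * (ENNReal.ofReal A - M)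
            + ENNReal.ofReal (1 - θ) * (ENNReal.ofReal B - M) :=
          add_le_add (mulsub _ _) (mulsub _ _)
      _ ≤ ENNReal.ofReal θ * rhoV Ω φ u + ENNReal.ofReal (1 - θ) * rhoV Ω φ v :=
          add_le_add (mul_le_mul_right (le_rhoV hw) _) (mul_le_mul_right (le_rhoV hw) _)
  · -- left continuity
    intro u hu
    refine tendsto_order.mpr ⟨?_, ?_⟩
    · intro a ha
      rw [rhoV, lt_iSup_iff] at ha
      obtain ⟨w, ha⟩ := ha
      rw [lt_iSup_iff] at ha
      obtain ⟨hw, ha⟩ := ha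
      set A := ∫ x in Ω, u x * divg w x with hA
      set M := vmodular Ω (conj φ) w with hM
      have hM' : M ≠ ∞ := by
        intro h
        rw [h, ENNReal.sub_top] at ha
        exact ENNReal.not_lt_zero ha
      have hlim : Tendsto (fun l : ℝ => ENNReal.ofReal (l * A) - M) (𝓝[<] (1 : ℝ))
          (𝓝 (ENNReal.ofReal A - M)) := by
        refine ENNReal.Tendsto.sub ?_ tendsto_const_nhds (Or.inr hM')
        have h1 : Tendsto (fun l : ℝ => l * A) (𝓝[<] (1 : ℝ)) (𝓝 A) := by
          have := ((continuous_mul_right A).tendsto (1 : ℝ)).mono_left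
            (nhdsWithin_le_nhds (s := Iio (1 : ℝ)))
          simpa using this
        exact (ENNReal.continuous_ofReal.tendsto A).comp h1
      filter_upwards [hlim.eventually_const_lt ha] with l hl
      refine hl.trans_le ?_
      have heq : ENNReal.ofReal (∫ x in Ω, (l * u x) * divg w x) = ENNReal.ofReal (l * A) := by
        congr 1
        rw [hA, ← integral_const_mul]
        exact integral_congr_ae (Eventually.of_forall fun x => by ring)
      calc ENNReal.ofReal (l * A) - M
          = ENNReal.ofReal (∫ x in Ω, (l * u x) * divg w x) - M := by rw [heq]
        _ ≤ rhoV Ω φ (fun x => l * u x) := le_rhoV hw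
    · intro b hb
      have hmem : Ioo (0 : ℝ) 1 ∈ 𝓝[<] (1 : ℝ) :=
        Ioo_mem_nhdsLT_of_mem ⟨zero_lt_one, le_rfl⟩
      filter_upwards [hmem] with l hl
      calc rhoV Ω φ (fun x => l * u x)
          ≤ rhoV Ω φ (fun x => 1 * u x) := rhoV_smul_mono φ u hl.1.le hl.2.le
        _ = rhoV Ω φ u := by simp
        _ < b := hb

end
end

section
/- Let φ ∈ Φ_c(Ω) satisfy restricted (VA1). If w ∈ C(Ω) with ρ_{φ*}(w) < ∞, then |w(x)| ≤ φ'_∞(x) for every x ∈ Ω. -/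
open MeasureTheory Filter Set Topology Metric
open scoped ENNReal NNReal

noncomputable section

variable {n : ℕ}

set_option maxHeartbeats 1600000 in
/-- If `φ ∈ Φ_c(Ω)` satisfies restricted (VA1) and `w ∈ C(Ω)` with
`ρ_{φ*}(w) < ∞`, then `|w| ≤ φ'_∞` everywhere in `Ω`. -/
theorem statement12 (n : ℕ) (Ω : Set (Euc n)) (hΩ : IsBoundedDomain Ω)
    (φ : Euc n → ℝ → ℝ≥0∞) (hφ : IsConvexPhi Ω φ) (hva : RestrictedVA1 Ω φ)
    (w : Euc n → ℝ) (hw : ContinuousOn w Ω)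
    (hρ : modular Ω (conj φ) w < ∞) :
    ∀ x ∈ Ω, ENNReal.ofReal |w x| ≤ recession φ x := by
  intro x₀ hx₀
  by_contra hcon
  push_neg at hcon
  -- basic constants
  have hrfin : recession φ x₀ ≠ ∞ := hcon.ne_top
  have ht₀ : 0 < |w x₀| := by
    by_contra h
    push_neg at h
    rw [ENNReal.ofReal_eq_zero.mpr h] at hcon
    exact (not_lt_of_ge zero_le) hcon
  have hrT : (recession φ x₀).toReal < |w x₀| :=
    (ENNReal.lt_ofReal_iff_toReal_lt hrfin).mp hcon
  have hrT0 : 0 ≤ (recession φ x₀).toReal := ENNReal.toReal_nonneg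
  obtain ⟨c, hcdef⟩ : ∃ c : ℝ, c = ((recession φ x₀).toReal + |w x₀|) / 2 := ⟨_, rfl⟩
  have hc0 : 0 < c := by rw [hcdef]; linarith
  have hct : c < |w x₀| := by rw [hcdef]; linarith
  have hrc : recession φ x₀ < ENNReal.ofReal c := by
    rw [ENNReal.lt_ofReal_iff_toReal_lt hrfin, hcdef]; linarith
  obtain ⟨c', hc'def⟩ : ∃ c' : ℝ, c' = (c + |w x₀|) / 2 := ⟨_, rfl⟩
  obtain ⟨c'', hc''def⟩ : ∃ c'' : ℝ, c'' = (c + c') / 2 := ⟨_, rfl⟩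
  have hcc' : c < c' := by rw [hc'def]; linarith
  have hc't : c' < |w x₀| := by rw [hc'def]; linarith
  have hcc'' : c < c'' := by rw [hc''def]; linarith
  have hc''c' : c'' < c' := by rw [hc''def]; linarith
  have hc''0 : 0 < c'' := lt_trans hc0 hcc''
  obtain ⟨η, hηdef⟩ : ∃ η : ℝ, η = c' / c'' - 1 := ⟨_, rfl⟩
  have hη : 0 < η := by
    rw [hηdef, sub_pos]
    exact (one_lt_div hc''0).mpr hc''c'
  have h1η : 1 + η = c' / c'' := by rw [hηdef]; ring
  have hc'0 : (0:ℝ) < c' := lt_trans hc0 hcc'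
  have hinvηc' : (1 + η)⁻¹ * c' = c'' := by
    rw [h1η, inv_div, div_mul_eq_mul_div, mul_div_assoc, div_self hc'0.ne', mul_one]
  obtain ⟨A', hA'def⟩ : ∃ A' : ℝ, A' = (c'' - c) / (2 * c) := ⟨_, rfl⟩
  have hA'0 : 0 < A' := by
    rw [hA'def]; exact div_pos (by linarith) (by linarith)
  -- eventual bound from the limsup
  have hev : ∀ᶠ t in atTop, φ x₀ t / ENNReal.ofReal t < ENNReal.ofReal c :=
    Filter.eventually_lt_of_limsup_lt hrc
  obtain ⟨T₀, hT₀⟩ := Filter.eventually_atTop.mp hev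
  obtain ⟨T, hTdef⟩ : ∃ T : ℝ, T = max T₀ 1 := ⟨_, rfl⟩
  have hT1 : (1 : ℝ) ≤ T := hTdef ▸ le_max_right _ _
  have hφT : ∀ t : ℝ, T ≤ t → φ x₀ t < ENNReal.ofReal (c * t) := by
    intro t ht
    have h1t : (1 : ℝ) ≤ t := hT1.trans ht
    have h := hT₀ t (((le_max_left _ _).trans_eq hTdef.symm).trans ht)
    rw [ENNReal.div_lt_iff (Or.inl (ENNReal.ofReal_pos.mpr (by linarith)).ne')
      (Or.inl ENNReal.ofReal_ne_top)] at h
    rwa [← ENNReal.ofReal_mul hc0.le] at h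
  -- the modulus of continuity from restricted (VA1)
  obtain ⟨ω, ⟨hωmono, hω0, hωtend⟩, H⟩ := hva.2 1 one_pos
  have hη' : (0 : ℝ≥0∞) < ENNReal.ofReal η := ENNReal.ofReal_pos.mpr hη
  obtain ⟨δ₂, hδ₂mem, hδ₂⟩ := mem_nhdsGT_iff_exists_Ioo_subset.mp
    (hωtend (Iio_mem_nhds hη'))
  -- continuity of w at x₀
  obtain ⟨δ₁, hδ₁pos, hδ₁⟩ := Metric.continuousWithinAt_iff.mp (hw x₀ hx₀)
    (|w x₀| - c') (by linarith)
  have hwlb : ∀ y ∈ Ω, dist y x₀ < δ₁ → c' ≤ |w y| := by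
    intro y hy hdy
    have h1 := hδ₁ hy hdy
    rw [Real.dist_eq] at h1
    have h2 : |w x₀| - |w y| ≤ |w x₀ - w y| := abs_sub_abs_le_abs_sub _ _
    rw [abs_sub_comm] at h2
    linarith
  -- Ω is open
  obtain ⟨δ₀, hδ₀pos, hδ₀ball⟩ := Metric.isOpen_iff.mp hΩ.1 x₀ hx₀
  obtain ⟨M, hMdef⟩ : ∃ M : ℝ, M = max T (2 * η / (c'' - c)) := ⟨_, rfl⟩
  have hM0 : 0 < M := lt_of_lt_of_le one_pos (hT1.trans (hMdef ▸ le_max_left _ _))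
  obtain ⟨δ, hδdef⟩ : ∃ δ : ℝ,
      δ = min (min δ₀ δ₁) (min (min δ₂ 1) (1 / (c * M))) := ⟨_, rfl⟩
  have hδpos : 0 < δ := by
    rw [hδdef]
    refine lt_min (lt_min hδ₀pos hδ₁pos) (lt_min (lt_min hδ₂mem one_pos) ?_)
    positivity
  have hδ0 : δ ≤ δ₀ := hδdef ▸ (min_le_left _ _).trans (min_le_left _ _)
  have hδ1 : δ ≤ δ₁ := hδdef ▸ (min_le_left _ _).trans (min_le_right _ _)
  have hδ2 : δ ≤ δ₂ :=
    hδdef ▸ (min_le_right _ _).trans ((min_le_left _ _).trans (min_le_left _ _))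
  have hδle1 : δ ≤ 1 :=
    hδdef ▸ (min_le_right _ _).trans ((min_le_left _ _).trans (min_le_right _ _))
  have hδM : δ ≤ 1 / (c * M) := hδdef ▸ (min_le_right _ _).trans (min_le_right _ _)
  have hballΩ : Metric.ball x₀ δ ⊆ Ω := fun y hy =>
    hδ₀ball (Metric.ball_subset_ball hδ0 hy)
  -- dispatch the case n = 0
  rcases Nat.eq_zero_or_pos n with hn0 | hn
  · subst hn0
    have hconj : conj φ x₀ |w x₀| = ∞ := by
      apply ENNReal.eq_top_of_forall_nnreal_le
      intro ρ
      obtain ⟨s, hsdef⟩ : ∃ s : ℝ, s = max T ((ρ : ℝ) / (|w x₀| - c)) := ⟨_, rfl⟩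
      have hsT : T ≤ s := hsdef ▸ le_max_left _ _
      have hs0 : (0 : ℝ) ≤ s := by linarith [hT1.trans hsT]
      have hφs : φ x₀ s < ENNReal.ofReal (c * s) := hφT s hsT
      have h1 : (ρ : ℝ) ≤ s * (|w x₀| - c) := by
        have h2 : (ρ : ℝ) / (|w x₀| - c) ≤ s := hsdef ▸ le_max_right _ _
        have h3 : (0 : ℝ) < |w x₀| - c := by linarith
        calc (ρ : ℝ) = (ρ : ℝ) / (|w x₀| - c) * (|w x₀| - c) := by field_simp
        _ ≤ s * (|w x₀| - c) := by nlinarith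
      calc (ρ : ℝ≥0∞) = ENNReal.ofReal ρ := ENNReal.ofReal_coe_nnreal.symm
      _ ≤ ENNReal.ofReal (s * |w x₀| - c * s) := ENNReal.ofReal_le_ofReal (by linarith)
      _ = ENNReal.ofReal (s * |w x₀|) - ENNReal.ofReal (c * s) :=
            ENNReal.ofReal_sub _ (by positivity)
      _ ≤ ENNReal.ofReal (s * |w x₀|) - φ x₀ s := tsub_le_tsub le_rfl hφs.le
      _ ≤ conj φ x₀ |w x₀| :=
            le_iSup (fun σ : {s : ℝ // 0 ≤ s} =>
              ENNReal.ofReal ((σ : ℝ) * |w x₀|) - φ x₀ (σ : ℝ)) ⟨s, hs0⟩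
    haveI : Subsingleton (Euc 0) := by
      constructor
      intro a b
      ext i
      exact absurd i.2 (by omega)
    have hall : ∀ y, conj φ y |w y| = ∞ := fun y => by
      rw [Subsingleton.elim y x₀]; exact hconj
    have hΩuniv : Ω = Set.univ := by
      apply Set.eq_univ_of_forall
      intro y
      rw [Subsingleton.elim y x₀]; exact hx₀
    have hmod : modular Ω (conj φ) w = ∞ := by
      unfold modular
      rw [lintegral_congr hall, lintegral_const, hΩuniv]
      simp only [Measure.restrict_univ]
      exact ENNReal.top_mul (isOpen_univ.measure_ne_zero volume Set.univ_nonempty)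
    exact absurd hρ (by rw [hmod]; exact lt_irrefl _)
  -- main case n ≥ 1 : pointwise lower bound on the conjugate
  have key : ∀ y ∈ Ω, 0 < dist y x₀ → dist y x₀ < δ →
      ENNReal.ofReal (A' / dist y x₀ ^ n) ≤ conj φ y |w y| := by
    intro y hy hd0 hdδ
    obtain ⟨d, hddef⟩ : ∃ d : ℝ, d = dist y x₀ := ⟨_, rfl⟩
    rw [← hddef] at hd0 hdδ ⊢
    have hdn : 0 < d ^ n := pow_pos hd0 n
    obtain ⟨t, htdef⟩ : ∃ t : ℝ, t = 1 / (c * d ^ n) := ⟨_, rfl⟩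
    have ht0 : 0 < t := by rw [htdef]; positivity
    have hctd : c * t = 1 / d ^ n := by rw [htdef]; field_simp
    have hdn_le : d ^ n ≤ d := by
      calc d ^ n ≤ d ^ 1 :=
        pow_le_pow_of_le_one hd0.le (le_of_lt (lt_of_lt_of_le hdδ hδle1)) hn
      _ = d := pow_one d
    have hMt : M < t := by
      have h1 : c * d ^ n < 1 / M := by
        have h2 : c * d ^ n ≤ c * d := by nlinarith
        have h3 : c * d < c * δ := by nlinarith
        have h4 : c * δ ≤ c * (1 / (c * M)) := by nlinarith
        have h5 : c * (1 / (c * M)) = 1 / M := by field_simp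
        linarith
      rw [htdef, lt_div_iff₀ (by positivity)]
      rw [lt_div_iff₀ hM0] at h1
      linarith
    have hTt : T ≤ t := ((le_max_left _ _).trans_eq hMdef.symm).trans hMt.le
    have hηt : 2 * η / (c'' - c) ≤ t :=
      ((le_max_right _ _).trans_eq hMdef.symm).trans hMt.le
    have hφxt : φ x₀ t < ENNReal.ofReal (c * t) := hφT t hTt
    have hcond : φ x₀ t ≤ ENNReal.ofReal 1 / ENNReal.ofReal (dist y x₀ ^ n) := by
      rw [← hddef, ← ENNReal.ofReal_div_of_pos hdn]
      exact le_of_lt (by rwa [hctd] at hφxt)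
    have hVA := H y hy x₀ hx₀ (Or.inr (lt_top_iff_ne_top.mpr hrfin)) t ht0.le hcond
    rw [← hddef] at hVA
    set s : ℝ := t * ((1 + ω d)⁻¹).toReal with hsdef
    have hωd : ω d ≤ ENNReal.ofReal η :=
      (hδ₂ ⟨hd0, lt_of_lt_of_le hdδ hδ2⟩).le
    have hsinv : (1 + η)⁻¹ ≤ ((1 + ω d)⁻¹).toReal := by
      have h1 : (1 + ω d) ≤ ENNReal.ofReal (1 + η) := by
        rw [ENNReal.ofReal_add (by norm_num) hη.le, ENNReal.ofReal_one]
        exact add_le_add le_rfl hωd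
      have h2 : (ENNReal.ofReal (1 + η))⁻¹ ≤ (1 + ω d)⁻¹ := ENNReal.inv_le_inv' h1
      have h3 : (ENNReal.ofReal (1 + η))⁻¹ = ENNReal.ofReal ((1 + η)⁻¹) :=
        (ENNReal.ofReal_inv_of_pos (by linarith)).symm
      have h4 : (1 + ω d)⁻¹ ≠ ∞ :=
        ENNReal.inv_ne_top.mpr (zero_lt_one.trans_le le_self_add).ne'
      calc (1 + η)⁻¹ = (ENNReal.ofReal ((1 + η)⁻¹)).toReal :=
        (ENNReal.toReal_ofReal (by positivity)).symm
      _ ≤ ((1 + ω d)⁻¹).toReal := ENNReal.toReal_mono h4 (h3 ▸ h2)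
    have hs0 : 0 ≤ s := by
      rw [hsdef]; positivity
    have hwy : c' ≤ |w y| := hwlb y hy (by rw [← hddef]; exact lt_of_lt_of_le hdδ hδ1)
    have hsw : t * c'' ≤ s * |w y| := by
      calc t * c'' = (t * (1 + η)⁻¹) * c' := by rw [mul_assoc, hinvηc']
      _ ≤ s * |w y| := by
          apply mul_le_mul _ hwy (by linarith) hs0
          rw [hsdef]
          exact mul_le_mul_of_nonneg_left hsinv ht0.le
    have hφys : φ y s ≤ ENNReal.ofReal (c * t + η) := by
      calc φ y s ≤ φ x₀ t + ω d := hVA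
      _ ≤ ENNReal.ofReal (c * t) + ENNReal.ofReal η := add_le_add hφxt.le hωd
      _ = ENNReal.ofReal (c * t + η) := (ENNReal.ofReal_add (by positivity) hη.le).symm
    have harith : A' / d ^ n ≤ t * c'' - (c * t + η) := by
      have h1 : 2 * η ≤ t * (c'' - c) := by
        rw [div_le_iff₀ (by linarith : (0 : ℝ) < c'' - c)] at hηt
        linarith
      have h3 : A' / d ^ n = t * (c'' - c) / 2 := by
        rw [htdef, hA'def]
        ring
      rw [h3]; linarith
    calc ENNReal.ofReal (A' / d ^ n)
        ≤ ENNReal.ofReal (t * c'' - (c * t + η)) := ENNReal.ofReal_le_ofReal harith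
    _ = ENNReal.ofReal (t * c'') - ENNReal.ofReal (c * t + η) :=
        ENNReal.ofReal_sub _ (by positivity)
    _ ≤ ENNReal.ofReal (s * |w y|) - φ y s :=
        tsub_le_tsub (ENNReal.ofReal_le_ofReal hsw) hφys
    _ ≤ conj φ y |w y| :=
        le_iSup (fun σ : {s : ℝ // 0 ≤ s} =>
          ENNReal.ofReal ((σ : ℝ) * |w y|) - φ y (σ : ℝ)) ⟨s, hs0⟩
  -- annuli
  set rad : ℕ → ℝ := fun k => δ / 2 ^ k with hraddef
  have hradpos : ∀ k, 0 < rad k := fun k => by positivity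
  have hradδ : ∀ k, rad k ≤ δ := fun k =>
    div_le_self hδpos.le (one_le_pow₀ (by norm_num : (1:ℝ) ≤ 2))
  have hradanti : ∀ j k : ℕ, j ≤ k → rad k ≤ rad j := fun j k hjk =>
    div_le_div_of_nonneg_left hδpos.le (by positivity)
      (pow_le_pow_right₀ (by norm_num) hjk)
  have hradsucc : ∀ k, rad (k + 1) = rad k * (1 / 2) := by
    intro k
    show δ / 2 ^ (k + 1) = δ / 2 ^ k * (1 / 2)
    rw [pow_succ]
    ring
  set Ann : ℕ → Set (Euc n) := fun k =>
    Metric.ball x₀ (rad k) \ Metric.closedBall x₀ (rad (k + 1)) with hAnndef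
  have hAnnmeas : ∀ k, MeasurableSet (Ann k) := fun k =>
    measurableSet_ball.diff measurableSet_closedBall
  have hAnnmem : ∀ k, ∀ y ∈ Ann k, rad (k+1) < dist y x₀ ∧ dist y x₀ < rad k := by
    intro k y hy
    constructor
    · have := hy.2
      simpa [Metric.mem_closedBall, not_le] using this
    · exact Metric.mem_ball.mp hy.1
  have hdis : ∀ j k : ℕ, j < k → Disjoint (Ann j) (Ann k) := by
    intro j k hlt
    refine Set.disjoint_left.mpr ?_
    intro y hyj hyk
    have h1 := (hAnnmem j y hyj).1
    have h2 := (hAnnmem k y hyk).2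
    have h3 : rad k ≤ rad (j + 1) := hradanti _ _ (by omega)
    linarith
  have hAnndisj : Pairwise (Function.onFun Disjoint Ann) := by
    intro j k hjk
    rcases hjk.lt_or_gt with h | h
    · exact hdis j k h
    · exact (hdis k j h).symm
  -- volume of annuli
  set V : ℝ≥0∞ := volume (Metric.ball (0 : Euc n) 1) with hVdef
  have hV0 : V ≠ 0 := (measure_ball_pos volume _ one_pos).ne'
  have hVtop : V ≠ ∞ := measure_ball_lt_top.ne
  have hhalf0 : (0:ℝ) ≤ (1/2 : ℝ) ^ n := by positivity
  have hhalf1 : ((1:ℝ)/2) ^ n ≤ 1 := pow_le_one₀ (by norm_num) (by norm_num)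
  have hhalf : (1/2 : ℝ) ^ n < 1 := pow_lt_one₀ (by norm_num) (by norm_num) (by omega)
  have hvol : ∀ k, ENNReal.ofReal (rad k ^ n * (1 - (1/2 : ℝ) ^ n)) * V ≤ volume (Ann k) := by
    intro k
    have hsub : Metric.closedBall x₀ (rad (k+1)) ⊆ Metric.ball x₀ (rad k) := by
      apply Metric.closedBall_subset_ball
      rw [hradsucc k]
      nlinarith [hradpos k]
    have hdiff : volume (Ann k) =
        volume (Metric.ball x₀ (rad k)) - volume (Metric.closedBall x₀ (rad (k+1))) := by
      rw [hAnndef]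
      exact measure_diff hsub measurableSet_closedBall.nullMeasurableSet
        measure_closedBall_lt_top.ne
    have hball : volume (Metric.ball x₀ (rad k)) = ENNReal.ofReal (rad k ^ n) * V := by
      rw [Measure.addHaar_ball_of_pos volume x₀ (hradpos k), finrank_euclideanSpace_fin, hVdef]
    have hcball : volume (Metric.closedBall x₀ (rad (k+1))) =
        ENNReal.ofReal (rad k ^ n * (1/2 : ℝ) ^ n) * V := by
      rw [Measure.addHaar_closedBall volume x₀ (hradpos (k+1)).le, finrank_euclideanSpace_fin,
        hVdef, hradsucc k, mul_pow]
    rw [hdiff, hball, hcball]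
    apply ENNReal.le_sub_of_add_le_right (ENNReal.mul_ne_top ENNReal.ofReal_ne_top hVtop)
    rw [← add_mul, ← ENNReal.ofReal_add (mul_nonneg (by positivity) (by linarith)) (by positivity)]
    apply mul_le_mul' _ le_rfl
    apply ENNReal.ofReal_le_ofReal
    nlinarith [pow_pos (hradpos k) n]
  -- lower bound on each annulus integral
  set e₀ : ℝ≥0∞ := ENNReal.ofReal (A' * (1 - (1/2 : ℝ) ^ n)) * V with he₀def
  have he₀0 : e₀ ≠ 0 := by
    rw [he₀def]
    apply mul_ne_zero _ hV0
    exact (ENNReal.ofReal_pos.mpr (by nlinarith)).ne'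
  have hAnnint : ∀ k, e₀ ≤ ∫⁻ y in Ann k, conj φ y |w y| := by
    intro k
    have hconst : ∀ y ∈ Ann k, ENNReal.ofReal (A' / rad k ^ n) ≤ conj φ y |w y| := by
      intro y hy
      obtain ⟨h1, h2⟩ := hAnnmem k y hy
      have hd0 : 0 < dist y x₀ := lt_trans (hradpos (k+1)) h1
      have hdδ : dist y x₀ < δ := lt_of_lt_of_le h2 (hradδ k)
      have hyΩ : y ∈ Ω := hballΩ (Metric.mem_ball.mpr hdδ)
      refine le_trans (ENNReal.ofReal_le_ofReal ?_) (key y hyΩ hd0 hdδ)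
      apply div_le_div_of_nonneg_left hA'0.le (pow_pos hd0 n)
      exact pow_le_pow_left₀ dist_nonneg h2.le n
    have hrk : (0:ℝ) < rad k ^ n := pow_pos (hradpos k) n
    have hmul : A' / rad k ^ n * (rad k ^ n * (1 - (1/2:ℝ)^n)) = A' * (1 - (1/2:ℝ)^n) := by
      field_simp [hrk.ne']
    calc e₀ = ENNReal.ofReal (A' / rad k ^ n) *
          (ENNReal.ofReal (rad k ^ n * (1 - (1/2 : ℝ) ^ n)) * V) := by
          rw [he₀def, ← mul_assoc, ← ENNReal.ofReal_mul (by positivity), hmul]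
    _ ≤ ENNReal.ofReal (A' / rad k ^ n) * volume (Ann k) :=
        mul_le_mul' le_rfl (hvol k)
    _ = ∫⁻ _ in Ann k, ENNReal.ofReal (A' / rad k ^ n) := (setLIntegral_const _ _).symm
    _ ≤ ∫⁻ y in Ann k, conj φ y |w y| := setLIntegral_mono' (hAnnmeas k) hconst
  -- conclude
  have hUnion : (⋃ k, Ann k) ⊆ Ω := by
    intro y hy
    obtain ⟨k, hk⟩ := Set.mem_iUnion.mp hy
    exact hballΩ (Metric.ball_subset_ball (hradδ k) hk.1)
  have htop : (⊤ : ℝ≥0∞) ≤ modular Ω (conj φ) w := by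
    calc (⊤ : ℝ≥0∞) = ∑' _ : ℕ, e₀ := (ENNReal.tsum_const_eq_top_of_ne_zero he₀0).symm
    _ ≤ ∑' k, ∫⁻ y in Ann k, conj φ y |w y| := ENNReal.tsum_le_tsum hAnnint
    _ = ∫⁻ y in ⋃ k, Ann k, conj φ y |w y| := (lintegral_iUnion hAnnmeas hAnndisj _).symm
    _ ≤ ∫⁻ y in Ω, conj φ y |w y| := lintegral_mono_set hUnion
    _ = modular Ω (conj φ) w := rfl
  exact absurd hρ (by rw [top_le_iff.mp htop]; exact lt_irrefl _)

end
end
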